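/- arXiv:1709.07143 — 7 statements merged into one kernel-verified Lean document; each statement's English description precedes it below -/
import Mathlib

section
/- Let H ∈ (1/2, 1) and let α, β > 0. Then α^{1-2H} f_H^{(1)}(αx) + β^{1-2H} f_H^{(2)}(βx) → 0 as x → +∞. -/
open MeasureTheory Real Filter Finset

/-- `f_H^{(1)}(x) = e^{-x}(Γ(2H) − ∫_0^x e^s s^{2H−1} ds)`. -/
noncomputable def fH1 (H x : ℝ) : ℝ :=
  Real.exp (-x) * (Real.Gamma (2 * H) - ∫ s in (0:ℝ)..x, Real.exp s * s ^ (2 * H - 1))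

/-- `f_H^{(2)}(x) = e^{x}(Γ(2H) − ∫_0^x e^{−s} s^{2H−1} ds)`. -/
noncomputable def fH2 (H x : ℝ) : ℝ :=
  Real.exp x * (Real.Gamma (2 * H) - ∫ s in (0:ℝ)..x, Real.exp (-s) * s ^ (2 * H - 1))

/-- `f_H = f_H^{(1)} + f_H^{(2)}`. -/
noncomputable def fH (H x : ℝ) : ℝ := fH1 H x + fH2 H x


lemma indicator_shift (g : ℝ → ℝ) (x u : ℝ) :
    Set.indicator (Set.Ioi x) g (u + x) = Set.indicator (Set.Ioi 0) (fun u => g (u + x)) u := by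
  simp only [Set.indicator, Set.mem_Ioi]
  have h : x < u + x ↔ 0 < u := ⟨fun h => by linarith, fun h => by linarith⟩
  simp only [h]

lemma integral_Ioi_shift (g : ℝ → ℝ) (x : ℝ) :
    ∫ s in Set.Ioi x, g s = ∫ u in Set.Ioi 0, g (u + x) := by
  rw [← integral_indicator measurableSet_Ioi, ← integral_indicator measurableSet_Ioi,
    ← integral_add_right_eq_self (Set.indicator (Set.Ioi x) g) x]
  exact integral_congr_ae (Filter.Eventually.of_forall fun u => indicator_shift g x u)

lemma integrableOn_Ioi_shift {g : ℝ → ℝ} {x : ℝ} (hg : IntegrableOn g (Set.Ioi x)) :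
    IntegrableOn (fun u => g (u + x)) (Set.Ioi 0) := by
  have h1 : Integrable (Set.indicator (Set.Ioi x) g) :=
    (integrable_indicator_iff measurableSet_Ioi).mpr hg
  exact (integrable_indicator_iff measurableSet_Ioi).mp
    ((h1.comp_add_right x).congr
      (Filter.Eventually.of_forall fun u => indicator_shift g x u))

lemma gamma_tail (p x : ℝ) (hp : 0 < p) (hx : 0 ≤ x) :
    Real.Gamma (p + 1) - ∫ s in (0:ℝ)..x, Real.exp (-s) * s ^ p
      = ∫ s in Set.Ioi x, Real.exp (-s) * s ^ p := by
  have hint : IntegrableOn (fun s => Real.exp (-s) * s ^ p) (Set.Ioi 0) := by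
    have := Real.GammaIntegral_convergent (by linarith : (0:ℝ) < p + 1)
    simpa using this
  have hsplit : Set.Ioi (0:ℝ) = Set.Ioc 0 x ∪ Set.Ioi x := by
    rw [Set.Ioc_union_Ioi' (le_refl x), min_eq_left hx]
  have hΓ : Real.Gamma (p + 1) = ∫ s in Set.Ioi 0, Real.exp (-s) * s ^ p := by
    rw [Real.Gamma_eq_integral (by linarith : (0:ℝ) < p + 1)]
    norm_num
  rw [hΓ, hsplit, setIntegral_union Set.Ioc_disjoint_Ioi_same measurableSet_Ioi
      (hint.mono_set (hsplit ▸ Set.subset_union_left))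
      (hint.mono_set (hsplit ▸ Set.subset_union_right)),
    intervalIntegral.integral_of_le hx]
  ring


lemma exp_tail_eq (p x : ℝ) :
    Real.exp x * ∫ s in Set.Ioi x, Real.exp (-s) * s ^ p
      = ∫ u in Set.Ioi 0, Real.exp (-u) * (x + u) ^ p := by
  have hs : ∫ s in Set.Ioi x, Real.exp (-s) * s ^ p
      = ∫ u in Set.Ioi 0, Real.exp (-(u + x)) * (u + x) ^ p :=
    integral_Ioi_shift (fun s => Real.exp (-s) * s ^ p) x
  rw [hs, ← integral_const_mul]
  apply integral_congr_ae (Filter.Eventually.of_forall fun u => ?_)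
  rw [show x + u = u + x by ring, ← mul_assoc, ← Real.exp_add,
    show x + -(u + x) = -u by ring]

lemma integrable_shifted (p x : ℝ) (hp : 0 < p) (hx : 0 ≤ x) :
    IntegrableOn (fun u => Real.exp (-u) * (x + u) ^ p) (Set.Ioi 0) := by
  have hint : IntegrableOn (fun s => Real.exp (-s) * s ^ p) (Set.Ioi x) := by
    have := Real.GammaIntegral_convergent (by linarith : (0:ℝ) < p + 1)
    have h2 : IntegrableOn (fun s => Real.exp (-s) * s ^ p) (Set.Ioi 0) := by simpa using this
    exact h2.mono_set (Set.Ioi_subset_Ioi hx)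
  have h3 := integrableOn_Ioi_shift hint
  have h4 := h3.const_mul (Real.exp x)
  apply h4.congr
  apply Filter.Eventually.of_forall fun u => ?_
  simp only []
  rw [show x + u = u + x by ring, ← mul_assoc, ← Real.exp_add,
    show x + -(u + x) = -u by ring]

lemma integral_exp_neg_mul_self : ∫ u in Set.Ioi (0:ℝ), Real.exp (-u) * u = 1 := by
  have h := Real.Gamma_eq_integral (by norm_num : (0:ℝ) < 2)
  rw [Real.Gamma_two] at h
  have h2 : (2:ℝ) - 1 = 1 := by norm_num
  rw [h2] at h
  simp only [Real.rpow_one] at h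
  exact h.symm

lemma integrable_exp_neg_mul_self : IntegrableOn (fun u : ℝ => Real.exp (-u) * u) (Set.Ioi 0) := by
  have := Real.GammaIntegral_convergent (by norm_num : (0:ℝ) < 2)
  have h2 : (2:ℝ) - 1 = 1 := by norm_num
  rw [h2] at this
  simpa using this

lemma integrable_exp_neg_Ioi0 : IntegrableOn (fun u : ℝ => Real.exp (-u)) (Set.Ioi (0:ℝ)) := by
  have := exp_neg_integrableOn_Ioi (0:ℝ) (zero_lt_one)
  simpa using this

lemma bernoulli_rpow (p a u : ℝ) (hp0 : 0 ≤ p) (hp1 : p ≤ 1) (ha : 0 < a) (hu : 0 ≤ u) :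
    (a + u) ^ p ≤ a ^ p + p * u * a ^ (p - 1) := by
  have hua : (0:ℝ) ≤ u / a := by positivity
  have h := rpow_one_add_le_one_add_mul_self (by linarith : (-1:ℝ) ≤ u / a) hp0 hp1
  have key : (a + u) ^ p = a ^ p * (1 + u / a) ^ p := by
    rw [← Real.mul_rpow ha.le (by positivity)]
    congr 1
    field_simp
  rw [key]
  calc a ^ p * (1 + u / a) ^ p ≤ a ^ p * (1 + p * (u / a)) :=
        mul_le_mul_of_nonneg_left h (Real.rpow_nonneg ha.le p)
    _ = a ^ p + p * u * a ^ (p - 1) := by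
        rw [Real.rpow_sub ha, Real.rpow_one]
        field_simp

lemma fH2_key (H x : ℝ) (hH : H ∈ Set.Ioo (1/2 : ℝ) 1) (hx : 0 < x) :
    fH2 H x - x ^ (2 * H - 1)
      = ∫ u in Set.Ioi 0, Real.exp (-u) * ((x + u) ^ (2 * H - 1) - x ^ (2 * H - 1)) := by
  set p := 2 * H - 1 with hpdef
  have hp0 : 0 < p := by simp only [hpdef]; linarith [hH.1]
  have h1 : fH2 H x = Real.exp x * ∫ s in Set.Ioi x, Real.exp (-s) * s ^ p := by
    rw [fH2, show 2 * H = p + 1 by simp only [hpdef]; ring]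
    rw [show p + 1 - 1 = p from by ring, gamma_tail p x hp0 hx.le]
  have hx_int : ∫ u in Set.Ioi (0:ℝ), Real.exp (-u) * x ^ p = x ^ p := by
    rw [integral_mul_const, integral_exp_neg_Ioi_zero, one_mul]
  have hsub : ∫ u in Set.Ioi (0:ℝ), Real.exp (-u) * ((x + u) ^ p - x ^ p)
      = (∫ u in Set.Ioi (0:ℝ), Real.exp (-u) * (x + u) ^ p)
        - ∫ u in Set.Ioi (0:ℝ), Real.exp (-u) * x ^ p := by
    rw [← integral_sub (integrable_shifted p x hp0 hx.le)
      (integrable_exp_neg_Ioi0.mul_const (x ^ p))]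
    apply integral_congr_ae (Filter.Eventually.of_forall fun u => ?_)
    ring
  rw [h1, exp_tail_eq p x, hsub, hx_int]

lemma fH2_tendsto (H : ℝ) (hH : H ∈ Set.Ioo (1/2 : ℝ) 1) :
    Filter.Tendsto (fun x : ℝ => fH2 H x - x ^ (2 * H - 1)) Filter.atTop (nhds 0) := by
  set p := 2 * H - 1 with hpdef
  have hp0 : 0 < p := by simp only [hpdef]; linarith [hH.1]
  have hp1 : p < 1 := by simp only [hpdef]; linarith [hH.2]
  have hupper : Filter.Tendsto (fun x : ℝ => p * x ^ (p - 1)) Filter.atTop (nhds 0) := by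
    have h := tendsto_rpow_neg_atTop (by linarith : 0 < 1 - p)
    have h2 : Filter.Tendsto (fun x : ℝ => x ^ (p - 1)) Filter.atTop (nhds 0) := by
      apply h.congr' ; filter_upwards with x; rw [neg_sub]
    simpa using h2.const_mul p
  apply tendsto_of_tendsto_of_tendsto_of_le_of_le' tendsto_const_nhds hupper
  · filter_upwards [Filter.eventually_gt_atTop 0] with x hx
    rw [fH2_key H x hH hx]
    apply setIntegral_nonneg measurableSet_Ioi
    intro u hu
    apply mul_nonneg (Real.exp_nonneg _)
    rw [sub_nonneg]
    exact Real.rpow_le_rpow hx.le (by linarith [Set.mem_Ioi.mp hu]) hp0.le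
  · filter_upwards [Filter.eventually_gt_atTop 0] with x hx
    rw [fH2_key H x hH hx]
    have hint1 : IntegrableOn
        (fun u => Real.exp (-u) * ((x + u) ^ p - x ^ p)) (Set.Ioi (0:ℝ)) := by
      have := (integrable_shifted p x hp0 hx.le).sub
        (integrable_exp_neg_Ioi0.mul_const (x ^ p))
      apply this.congr
      apply Filter.Eventually.of_forall fun u => ?_
      simp only [Pi.sub_apply]; ring
    have hint2 : IntegrableOn
        (fun u : ℝ => p * x ^ (p - 1) * (Real.exp (-u) * u)) (Set.Ioi (0:ℝ)) :=
      integrable_exp_neg_mul_self.const_mul _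
    have hmono := setIntegral_mono_on hint1 hint2 measurableSet_Ioi ?_
    · calc _ ≤ ∫ u in Set.Ioi (0:ℝ), p * x ^ (p - 1) * (Real.exp (-u) * u) := hmono
        _ = p * x ^ (p - 1) := by rw [integral_const_mul, integral_exp_neg_mul_self, mul_one]
    · intro u hu
      have hu0 : 0 < u := Set.mem_Ioi.mp hu
      have hb := bernoulli_rpow p x u hp0.le hp1.le hx hu0.le
      calc Real.exp (-u) * ((x + u) ^ p - x ^ p)
          ≤ Real.exp (-u) * (p * u * x ^ (p - 1)) :=
            mul_le_mul_of_nonneg_left (by linarith) (Real.exp_nonneg _)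
        _ = p * x ^ (p - 1) * (Real.exp (-u) * u) := by ring
lemma fH1_swap (p x : ℝ) :
    Real.exp (-x) * ∫ s in (0:ℝ)..x, Real.exp s * s ^ p
      = ∫ u in (0:ℝ)..x, Real.exp (-u) * (x - u) ^ p := by
  have h := intervalIntegral.integral_comp_sub_left (a := (0:ℝ)) (b := x)
    (fun u => Real.exp (-u) * (x - u) ^ p) x
  simp only [sub_zero, sub_self] at h
  rw [← h, ← intervalIntegral.integral_const_mul]
  apply intervalIntegral.integral_congr
  intro s _
  simp only []
  rw [show x - (x - s) = s by ring, show -(x - s) = s - x by ring,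
    Real.exp_sub, Real.exp_neg]
  ring

lemma cont_aux (p x : ℝ) (hp : 0 < p) :
    Continuous (fun u : ℝ => Real.exp (-u) * (x - u) ^ p) := by
  apply Continuous.mul (by continuity)
  have h : Continuous fun t : ℝ => t ^ p :=
    continuous_iff_continuousAt.mpr fun t => Real.continuousAt_rpow_const t p (Or.inr hp.le)
  exact h.comp (by continuity)

lemma fH1_key (H x : ℝ) (hH : H ∈ Set.Ioo (1/2 : ℝ) 1) (hx : 0 < x) :
    fH1 H x + x ^ (2 * H - 1)
      = Real.exp (-x) * Real.Gamma (2 * H) + x ^ (2 * H - 1) * Real.exp (-x)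
        + ∫ u in Set.Ioc 0 x, Real.exp (-u) * (x ^ (2 * H - 1) - (x - u) ^ (2 * H - 1)) := by
  set p := 2 * H - 1 with hpdef
  have hp0 : 0 < p := by simp only [hpdef]; linarith [hH.1]
  have h1 : fH1 H x = Real.exp (-x) * Real.Gamma (2 * H)
      - ∫ u in Set.Ioc 0 x, Real.exp (-u) * (x - u) ^ p := by
    rw [fH1, mul_sub, fH1_swap p x, intervalIntegral.integral_of_le hx.le]
  -- x ^ p = ∫_{Ioc 0 x} x^p e^{-u} + x^p e^{-x}
  have hsplit : Set.Ioi (0:ℝ) = Set.Ioc 0 x ∪ Set.Ioi x := by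
    rw [Set.Ioc_union_Ioi' (le_refl x), min_eq_left hx.le]
  have hin : IntegrableOn (fun u : ℝ => x ^ p * Real.exp (-u)) (Set.Ioi 0) :=
    integrable_exp_neg_Ioi0.const_mul _
  have hinIoc : IntegrableOn (fun u : ℝ => x ^ p * Real.exp (-u)) (Set.Ioc 0 x) :=
    hin.mono_set (hsplit ▸ Set.subset_union_left)
  have hxp : x ^ p = (∫ u in Set.Ioc (0:ℝ) x, x ^ p * Real.exp (-u))
      + x ^ p * Real.exp (-x) := by
    have h2 : ∫ u in Set.Ioi (0:ℝ), x ^ p * Real.exp (-u) = x ^ p := by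
      rw [integral_const_mul, integral_exp_neg_Ioi_zero, mul_one]
    have h3 : ∫ u in Set.Ioi x, x ^ p * Real.exp (-u) = x ^ p * Real.exp (-x) := by
      rw [integral_const_mul, integral_exp_neg_Ioi]
    have hunion : ∫ u in Set.Ioi (0:ℝ), x ^ p * Real.exp (-u)
        = (∫ u in Set.Ioc (0:ℝ) x, x ^ p * Real.exp (-u))
          + ∫ u in Set.Ioi x, x ^ p * Real.exp (-u) := by
      rw [hsplit]
      exact setIntegral_union Set.Ioc_disjoint_Ioi_same measurableSet_Ioi hinIoc
        (hin.mono_set (hsplit ▸ Set.subset_union_right))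
    linarith
  have hdiff : ∫ u in Set.Ioc (0:ℝ) x, Real.exp (-u) * (x ^ p - (x - u) ^ p)
      = (∫ u in Set.Ioc (0:ℝ) x, x ^ p * Real.exp (-u))
        - ∫ u in Set.Ioc (0:ℝ) x, Real.exp (-u) * (x - u) ^ p := by
    rw [← integral_sub hinIoc ((cont_aux p x hp0).integrableOn_Ioc)]
    apply integral_congr_ae (Filter.Eventually.of_forall fun u => ?_)
    ring
  rw [h1, hdiff]
  linarith [hxp]
lemma cont_aux2 (p x : ℝ) (hp : 0 < p) :
    Continuous (fun u : ℝ => Real.exp (-u) * (x ^ p - (x - u) ^ p)) := by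
  apply Continuous.mul (by continuity)
  apply Continuous.sub continuous_const
  have h : Continuous fun t : ℝ => t ^ p :=
    continuous_iff_continuousAt.mpr fun t => Real.continuousAt_rpow_const t p (Or.inr hp.le)
  exact h.comp (by continuity)

lemma J_upper (p x : ℝ) (hp0 : 0 < p) (hp1 : p < 1) (hx : 0 < x) :
    ∫ u in Set.Ioc (0:ℝ) x, Real.exp (-u) * (x ^ p - (x - u) ^ p)
      ≤ p * (x / 2) ^ (p - 1) + (x / 2) * (Real.exp (-(x / 2)) * x ^ p) := by
  have hc := cont_aux2 p x hp0
  have hsplit2 : Set.Ioc (0:ℝ) x = Set.Ioc 0 (x / 2) ∪ Set.Ioc (x / 2) x :=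
    (Set.Ioc_union_Ioc_eq_Ioc (by linarith) (by linarith)).symm
  have int1 : IntegrableOn (fun u : ℝ => Real.exp (-u) * (x ^ p - (x - u) ^ p))
      (Set.Ioc 0 (x / 2)) := hc.integrableOn_Ioc
  have int2 : IntegrableOn (fun u : ℝ => Real.exp (-u) * (x ^ p - (x - u) ^ p))
      (Set.Ioc (x / 2) x) := hc.integrableOn_Ioc
  rw [hsplit2, setIntegral_union (Set.Ioc_disjoint_Ioc_of_le le_rfl) measurableSet_Ioc int1 int2]
  have hJ1 : ∫ u in Set.Ioc (0:ℝ) (x / 2), Real.exp (-u) * (x ^ p - (x - u) ^ p)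
      ≤ p * (x / 2) ^ (p - 1) := by
    have hb1 : ∫ u in Set.Ioc (0:ℝ) (x / 2), Real.exp (-u) * (x ^ p - (x - u) ^ p)
        ≤ ∫ u in Set.Ioc (0:ℝ) (x / 2),
            (p * (x / 2) ^ (p - 1)) * (Real.exp (-u) * u) := by
      have hcm : IntegrableOn (fun u : ℝ => (p * (x / 2) ^ (p - 1)) * (Real.exp (-u) * u))
          (Set.Ioi 0) := integrable_exp_neg_mul_self.const_mul _
      apply setIntegral_mono_on int1 (hcm.mono_set Set.Ioc_subset_Ioi_self)
        measurableSet_Ioc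
      intro u hu
      obtain ⟨hu0, hu2⟩ := hu
      have hxu : 0 < x - u := by linarith
      have hb := bernoulli_rpow p (x - u) u hp0.le hp1.le hxu hu0.le
      rw [show x - u + u = x by ring] at hb
      have hmono : (x - u) ^ (p - 1) ≤ (x / 2) ^ (p - 1) :=
        Real.rpow_le_rpow_of_nonpos (by linarith) (by linarith) (by linarith)
      have h2 : x ^ p - (x - u) ^ p ≤ p * u * (x / 2) ^ (p - 1) := by
        have : p * u * (x - u) ^ (p - 1) ≤ p * u * (x / 2) ^ (p - 1) :=
          mul_le_mul_of_nonneg_left hmono (by positivity)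
        linarith
      calc Real.exp (-u) * (x ^ p - (x - u) ^ p)
          ≤ Real.exp (-u) * (p * u * (x / 2) ^ (p - 1)) :=
            mul_le_mul_of_nonneg_left h2 (Real.exp_nonneg _)
        _ = (p * (x / 2) ^ (p - 1)) * (Real.exp (-u) * u) := by ring
    have hb2 : ∫ u in Set.Ioc (0:ℝ) (x / 2),
          (p * (x / 2) ^ (p - 1)) * (Real.exp (-u) * u)
        ≤ ∫ u in Set.Ioi (0:ℝ), (p * (x / 2) ^ (p - 1)) * (Real.exp (-u) * u) := by
      apply setIntegral_mono_set (integrable_exp_neg_mul_self.const_mul _)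
      · apply (ae_restrict_iff' measurableSet_Ioi).mpr
        apply Filter.Eventually.of_forall
        intro u hu
        have hu0 : 0 < u := hu
        have : (0:ℝ) ≤ (x / 2) ^ (p - 1) := Real.rpow_nonneg (by linarith) _
        positivity
      · exact (Set.Ioc_subset_Ioi_self).eventuallyLE
    have hb3 : ∫ u in Set.Ioi (0:ℝ), (p * (x / 2) ^ (p - 1)) * (Real.exp (-u) * u)
        = p * (x / 2) ^ (p - 1) := by
      rw [integral_const_mul, integral_exp_neg_mul_self, mul_one]
    linarith
  have hJ2 : ∫ u in Set.Ioc (x / 2) x, Real.exp (-u) * (x ^ p - (x - u) ^ p)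
      ≤ (x / 2) * (Real.exp (-(x / 2)) * x ^ p) := by
    have hb1 : ∫ u in Set.Ioc (x / 2) x, Real.exp (-u) * (x ^ p - (x - u) ^ p)
        ≤ ∫ _u in Set.Ioc (x / 2) x, Real.exp (-(x / 2)) * x ^ p := by
      apply setIntegral_mono_on int2
        ((integrableOn_const_iff).mpr (Or.inr (by rw [Real.volume_Ioc]; exact ENNReal.ofReal_lt_top)))
        measurableSet_Ioc
      intro u hu
      obtain ⟨hu1, hu2⟩ := hu
      have h1 : x ^ p - (x - u) ^ p ≤ x ^ p := by
        have := Real.rpow_nonneg (by linarith : (0:ℝ) ≤ x - u) p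
        linarith
      have h2 : Real.exp (-u) ≤ Real.exp (-(x / 2)) := Real.exp_le_exp.mpr (by linarith)
      have h3 : 0 ≤ x ^ p - (x - u) ^ p := by
        rw [sub_nonneg]
        exact Real.rpow_le_rpow (by linarith) (by linarith) hp0.le
      calc Real.exp (-u) * (x ^ p - (x - u) ^ p)
          ≤ Real.exp (-(x / 2)) * (x ^ p - (x - u) ^ p) := mul_le_mul_of_nonneg_right h2 h3
        _ ≤ Real.exp (-(x / 2)) * x ^ p :=
            mul_le_mul_of_nonneg_left h1 (Real.exp_nonneg _)
    have hb2 : ∫ _u in Set.Ioc (x / 2) x, Real.exp (-(x / 2)) * x ^ p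
        = (x / 2) * (Real.exp (-(x / 2)) * x ^ p) := by
      rw [setIntegral_const, Real.volume_real_Ioc_of_le (by linarith),
        smul_eq_mul, show x - x / 2 = x / 2 by ring]
    linarith
  linarith
lemma fH1_tendsto (H : ℝ) (hH : H ∈ Set.Ioo (1/2 : ℝ) 1) :
    Filter.Tendsto (fun x : ℝ => fH1 H x + x ^ (2 * H - 1)) Filter.atTop (nhds 0) := by
  set p := 2 * H - 1 with hpdef
  have hp0 : 0 < p := by simp only [hpdef]; linarith [hH.1]
  have hp1 : p < 1 := by simp only [hpdef]; linarith [hH.2]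
  -- the three pieces
  have hA : Filter.Tendsto (fun x : ℝ => Real.exp (-x) * Real.Gamma (2 * H))
      Filter.atTop (nhds 0) := by
    have := (Real.tendsto_exp_neg_atTop_nhds_zero).mul_const (Real.Gamma (2 * H))
    simpa using this
  have hB : Filter.Tendsto (fun x : ℝ => x ^ p * Real.exp (-x)) Filter.atTop (nhds 0) := by
    have := tendsto_rpow_mul_exp_neg_mul_atTop_nhds_zero p 1 one_pos
    apply this.congr'
    filter_upwards with x
    rw [neg_one_mul]
  have hJ : Filter.Tendsto
      (fun x : ℝ => ∫ u in Set.Ioc (0:ℝ) x, Real.exp (-u) * (x ^ p - (x - u) ^ p))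
      Filter.atTop (nhds 0) := by
    have hU : Filter.Tendsto
        (fun x : ℝ => p * (x / 2) ^ (p - 1) + (x / 2) * (Real.exp (-(x / 2)) * x ^ p))
        Filter.atTop (nhds 0) := by
      have hU1 : Filter.Tendsto (fun x : ℝ => p * (x / 2) ^ (p - 1))
          Filter.atTop (nhds 0) := by
        have h1 := (tendsto_rpow_neg_atTop (by linarith : 0 < 1 - p)).comp
          (tendsto_id.atTop_div_const two_pos)
        have h2 : Filter.Tendsto (fun x : ℝ => (x / 2) ^ (p - 1)) Filter.atTop (nhds 0) := by
          apply h1.congr'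
          filter_upwards with x
          simp only [Function.comp_apply, id_eq, neg_sub]
        simpa using h2.const_mul p
      have hU2 : Filter.Tendsto (fun x : ℝ => (x / 2) * (Real.exp (-(x / 2)) * x ^ p))
          Filter.atTop (nhds 0) := by
        have h1 := (tendsto_rpow_mul_exp_neg_mul_atTop_nhds_zero (p + 1) (1/2)
          (by norm_num)).const_mul (1/2 : ℝ)
        rw [mul_zero] at h1
        apply h1.congr'
        filter_upwards [Filter.eventually_gt_atTop 0] with x hx
        rw [Real.rpow_add_one hx.ne' p]
        rw [show -(1/2 : ℝ) * x = -(x / 2) by ring]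
        ring
      simpa using hU1.add hU2
    apply tendsto_of_tendsto_of_tendsto_of_le_of_le' tendsto_const_nhds hU
    · filter_upwards [Filter.eventually_gt_atTop 0] with x hx
      apply setIntegral_nonneg measurableSet_Ioc
      intro u hu
      apply mul_nonneg (Real.exp_nonneg _)
      rw [sub_nonneg]
      exact Real.rpow_le_rpow (by linarith [hu.2]) (by linarith [hu.1]) hp0.le
    · filter_upwards [Filter.eventually_gt_atTop 0] with x hx
      exact J_upper p x hp0 hp1 hx
  have hsum := (hA.add hB).add hJ
  rw [add_zero, add_zero] at hsum
  apply hsum.congr'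
  filter_upwards [Filter.eventually_gt_atTop 0] with x hx
  exact (fH1_key H x hH hx).symm

lemma fH2_tendsto' (H : ℝ) (hH : H ∈ Set.Ioo (1/2 : ℝ) 1) :
    Filter.Tendsto (fun x : ℝ => fH2 H x - x ^ (2 * H - 1)) Filter.atTop (nhds 0) :=
  fH2_tendsto H hH

theorem stmt_0 (H α β : ℝ) (hH : H ∈ Set.Ioo (1/2 : ℝ) 1) (hα : 0 < α) (hβ : 0 < β) :
    Filter.Tendsto
      (fun x : ℝ => α ^ (1 - 2 * H) * fH1 H (α * x) + β ^ (1 - 2 * H) * fH2 H (β * x))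
      Filter.atTop (nhds 0) := by
  set p := 2 * H - 1 with hpdef
  have hp0 : 0 < p := by simp only [hpdef]; linarith [hH.1]
  have hcompα : Filter.Tendsto (fun x : ℝ => α * x) Filter.atTop Filter.atTop :=
    Filter.Tendsto.const_mul_atTop hα tendsto_id
  have hcompβ : Filter.Tendsto (fun x : ℝ => β * x) Filter.atTop Filter.atTop :=
    Filter.Tendsto.const_mul_atTop hβ tendsto_id
  have h1 : Filter.Tendsto
      (fun x : ℝ => α ^ (1 - 2 * H) * (fH1 H (α * x) + (α * x) ^ p))
      Filter.atTop (nhds 0) := by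
    have := ((fH1_tendsto H hH).comp hcompα).const_mul (α ^ (1 - 2 * H))
    rw [mul_zero] at this
    exact this
  have h2 : Filter.Tendsto
      (fun x : ℝ => β ^ (1 - 2 * H) * (fH2 H (β * x) - (β * x) ^ p))
      Filter.atTop (nhds 0) := by
    have := ((fH2_tendsto H hH).comp hcompβ).const_mul (β ^ (1 - 2 * H))
    rw [mul_zero] at this
    exact this
  have hsum := h1.add h2
  rw [add_zero] at hsum
  apply hsum.congr'
  filter_upwards [Filter.eventually_gt_atTop 0] with x hx
  have hcancel : ∀ γ : ℝ, 0 < γ → γ ^ (1 - 2 * H) * (γ * x) ^ p = x ^ p := by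
    intro γ hγ
    rw [Real.mul_rpow hγ.le hx.le, ← mul_assoc, ← Real.rpow_add hγ,
      show 1 - 2 * H + p = 0 by simp only [hpdef]; ring, Real.rpow_zero, one_mul]
  have hc1 := hcancel α hα
  have hc2 := hcancel β hβ
  rw [mul_add, mul_sub, hc1, hc2]
  ring
end

section
/- Let H ∈ (1/2, 1) and let α, β > 0. Then α^{1-2H} f_H^{(1)}(αx) + β^{1-2H} f_H^{(2)}(βx) is asymptotically equivalent to ((α+β)/(αβ))(2H−1) x^{2H−2} as x → +∞; that is, the ratio of the two expressions tends to 1 as x → +∞. -/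
open MeasureTheory Real Filter Finset

open Set

lemma aux_int1 {p : ℝ} (hp : -1 < p) (a b : ℝ) :
    IntervalIntegrable (fun s => Real.exp s * s ^ p) volume a b :=
  (intervalIntegral.intervalIntegrable_rpow' hp).continuousOn_mul
    Real.continuous_exp.continuousOn

lemma aux_int2 {p : ℝ} (hp : -1 < p) (a b : ℝ) :
    IntervalIntegrable (fun s => Real.exp (-s) * s ^ p) volume a b :=
  (intervalIntegral.intervalIntegrable_rpow' hp).continuousOn_mul
    (Real.continuous_exp.comp continuous_neg).continuousOn

lemma aux_int3 {p : ℝ} (hp : -1 < p) {y : ℝ} (hy : 0 ≤ y) :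
    IntegrableOn (fun s => Real.exp (-s) * s ^ p) (Ioi y) := by
  have h := Real.GammaIntegral_convergent (s := p + 1) (by linarith)
  simpa using h.mono_set (Set.Ioi_subset_Ioi hy)

lemma sqrt_tendsto_atTop : Tendsto Real.sqrt atTop atTop := by
  apply tendsto_atTop_atTop.2
  intro b
  refine ⟨(max b 0) ^ 2, fun a ha => ?_⟩
  calc b ≤ max b 0 := le_max_left _ _
    _ = Real.sqrt ((max b 0) ^ 2) := (Real.sqrt_sq (le_max_right _ _)).symm
    _ ≤ Real.sqrt a := Real.sqrt_le_sqrt ha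

lemma integral_exp_neg_interval (a b : ℝ) :
    ∫ s in a..b, Real.exp (-s) = Real.exp (-a) - Real.exp (-b) := by
  have : ∫ s in a..b, Real.exp (-s) = (fun s => -Real.exp (-s)) b - (fun s => -Real.exp (-s)) a := by
    apply intervalIntegral.integral_eq_sub_of_hasDerivAt
    · intro s _
      have h1 := (Real.hasDerivAt_exp (-s)).comp s (hasDerivAt_neg s)
      have := h1.neg
      exact this.congr_deriv (by ring)
    · exact ((Real.continuous_exp.comp continuous_neg).intervalIntegrable _ _)
  rw [this]; ring

lemma ibp1 {r : ℝ} (hr0 : 0 < r) (hr1 : r < 1) {x : ℝ} (hx : 0 ≤ x) :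
    ∫ s in (0:ℝ)..x, Real.exp s * s ^ r
      = Real.exp x * x ^ r - r * ∫ s in (0:ℝ)..x, Real.exp s * s ^ (r - 1) := by
  have hr1' : (-1:ℝ) < r - 1 := by linarith
  set F : ℝ → ℝ := fun s => Real.exp s * s ^ r - r * ∫ t in (0:ℝ)..s, Real.exp t * t ^ (r - 1)
    with hF
  have key : ∫ s in (0:ℝ)..x, Real.exp s * s ^ r = F x - F 0 := by
    apply intervalIntegral.integral_eq_sub_of_hasDerivAt_of_le hx _ _ (aux_int1 (by linarith) 0 x)
    · apply ContinuousOn.sub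
      · exact Real.continuous_exp.continuousOn.mul
          (fun s _ => (Real.continuousAt_rpow_const s r (Or.inr hr0.le)).continuousWithinAt)
      · apply continuousOn_const.mul
        have := intervalIntegral.continuousOn_primitive_interval'
          (aux_int1 hr1' 0 x) (left_mem_uIcc (a := (0:ℝ)) (b := x))
        rwa [uIcc_of_le hx] at this
    · intro s hs
      have hs0 : 0 < s := hs.1
      have h1 : HasDerivAt (fun s : ℝ => Real.exp s * s ^ r)
          (Real.exp s * s ^ r + Real.exp s * (r * s ^ (r - 1))) s :=
        (Real.hasDerivAt_exp s).mul (Real.hasDerivAt_rpow_const (Or.inl hs0.ne'))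
      have h2 : HasDerivAt (fun u : ℝ => ∫ t in (0:ℝ)..u, Real.exp t * t ^ (r - 1))
          (Real.exp s * s ^ (r - 1)) s := by
        apply intervalIntegral.integral_hasDerivAt_right (aux_int1 hr1' 0 s)
        · exact (Real.measurable_exp.mul (measurable_id.pow_const _)).stronglyMeasurable
            |>.stronglyMeasurableAtFilter
        · exact Real.continuous_exp.continuousAt.mul
            (Real.continuousAt_rpow_const s (r - 1) (Or.inl hs0.ne'))
      have h := h1.sub (h2.const_mul r)
      exact h.congr_deriv (by ring)
  rw [key]
  have hF0 : F 0 = 0 := by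
    simp [hF, Real.zero_rpow hr0.ne']
  rw [hF0, hF]
  ring

lemma ibp2 {r : ℝ} (hr0 : 0 < r) (hr1 : r < 1) {y : ℝ} (hy : 0 < y) :
    ∫ s in Ioi y, Real.exp (-s) * s ^ r
      = Real.exp (-y) * y ^ r + r * ∫ s in Ioi y, Real.exp (-s) * s ^ (r - 1) := by
  have hr1' : (-1:ℝ) < r - 1 := by linarith
  have hI1 : IntegrableOn (fun s => Real.exp (-s) * s ^ r) (Ioi y) := aux_int3 (by linarith) hy.le
  have hI2 : IntegrableOn (fun s => Real.exp (-s) * s ^ (r - 1)) (Ioi y) := aux_int3 hr1' hy.le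
  have key : ∀ T : ℝ, y ≤ T → ∫ s in y..T, Real.exp (-s) * s ^ r
      = Real.exp (-y) * y ^ r - Real.exp (-T) * T ^ r
        + r * ∫ s in y..T, Real.exp (-s) * s ^ (r - 1) := by
    intro T hT
    have heq : ∫ s in y..T,
        (Real.exp (-s) * s ^ r - r * (Real.exp (-s) * s ^ (r - 1)))
        = -(Real.exp (-T) * T ^ r) - -(Real.exp (-y) * y ^ r) := by
      apply intervalIntegral.integral_eq_sub_of_hasDerivAt_of_le hT
        (f := fun s => -(Real.exp (-s) * s ^ r))
      · apply ContinuousOn.neg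
        exact (Real.continuous_exp.comp continuous_neg).continuousOn.mul
          (fun s _ => (Real.continuousAt_rpow_const s r (Or.inr hr0.le)).continuousWithinAt)
      · intro s hs
        have hs0 : 0 < s := lt_of_le_of_lt hy.le hs.1
        have h1 : HasDerivAt (fun s : ℝ => Real.exp (-s)) (-Real.exp (-s)) s := by
          have := (Real.hasDerivAt_exp (-s)).comp s (hasDerivAt_neg s)
          exact this.congr_deriv (by ring)
        have h2 : HasDerivAt (fun s : ℝ => (s : ℝ) ^ r) (r * s ^ (r - 1)) s :=
          Real.hasDerivAt_rpow_const (Or.inl hs0.ne')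
        have h := (h1.mul h2).neg
        exact h.congr_deriv (by ring)
      · exact (aux_int2 (by linarith) y T).sub ((aux_int2 hr1' y T).const_mul r)
    rw [intervalIntegral.integral_sub (aux_int2 (by linarith) y T)
      ((aux_int2 hr1' y T).const_mul r), intervalIntegral.integral_const_mul] at heq
    linarith
  have l1 : Tendsto (fun T => ∫ s in y..T, Real.exp (-s) * s ^ r) atTop
      (nhds (∫ s in Ioi y, Real.exp (-s) * s ^ r)) :=
    intervalIntegral_tendsto_integral_Ioi y hI1 tendsto_id
  have l2 : Tendsto (fun T => ∫ s in y..T, Real.exp (-s) * s ^ (r - 1)) atTop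
      (nhds (∫ s in Ioi y, Real.exp (-s) * s ^ (r - 1))) :=
    intervalIntegral_tendsto_integral_Ioi y hI2 tendsto_id
  have l3 : Tendsto (fun T : ℝ => Real.exp (-T) * T ^ r) atTop (nhds 0) := by
    have := tendsto_rpow_mul_exp_neg_mul_atTop_nhds_zero r 1 one_pos
    simpa [mul_comm, one_mul] using this
  have lrhs : Tendsto (fun T => Real.exp (-y) * y ^ r - Real.exp (-T) * T ^ r
      + r * ∫ s in y..T, Real.exp (-s) * s ^ (r - 1)) atTop
      (nhds (Real.exp (-y) * y ^ r - 0 + r * ∫ s in Ioi y, Real.exp (-s) * s ^ (r - 1))) :=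
    (tendsto_const_nhds.sub l3).add (l2.const_mul r)
  have l1' := l1.congr' ((eventually_ge_atTop y).mono fun T hT => key T hT)
  have := tendsto_nhds_unique l1' lrhs
  linarith

lemma gamma_split {r : ℝ} (hr0 : 0 < r) {x : ℝ} (hx : 0 ≤ x) :
    Real.Gamma (r + 1) - ∫ s in (0:ℝ)..x, Real.exp (-s) * s ^ r
      = ∫ s in Ioi x, Real.exp (-s) * s ^ r := by
  have h2H : (0:ℝ) < r + 1 := by linarith
  rw [Real.Gamma_eq_integral h2H]
  simp only [add_sub_cancel_right]
  rw [intervalIntegral.integral_of_le hx]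
  have hu : Ioc 0 x ∪ Ioi x = Ioi (0:ℝ) := Ioc_union_Ioi_eq_Ioi hx
  rw [← hu, setIntegral_union (Ioc_disjoint_Ioi le_rfl) measurableSet_Ioi
    ((aux_int3 (by linarith) le_rfl).mono_set Ioc_subset_Ioi_self) (aux_int3 (by linarith) hx)]
  ring

lemma asymp1 {c : ℝ} (hc : -1 < c) (hc0 : c < 0) :
    Tendsto (fun x => Real.exp (-x) * (∫ s in (0:ℝ)..x, Real.exp s * s ^ c) / x ^ c)
      atTop (nhds 1) := by
  have hc1 : (0:ℝ) < c + 1 := by linarith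
  have hlow : ∀ᶠ x : ℝ in atTop, 1 - Real.exp (-Real.sqrt x)
      ≤ Real.exp (-x) * (∫ s in (0:ℝ)..x, Real.exp s * s ^ c) / x ^ c := by
    filter_upwards [eventually_ge_atTop (4:ℝ)] with x hx4
    set d := Real.sqrt x with hd
    have hx0 : (0:ℝ) < x := by linarith
    have hd0 : 0 ≤ d := Real.sqrt_nonneg x
    have hd2 : 2 ≤ d := by
      rw [hd, show (2:ℝ) = Real.sqrt 4 by
        rw [show (4:ℝ) = 2 ^ 2 by norm_num, Real.sqrt_sq]; norm_num]
      exact Real.sqrt_le_sqrt hx4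
    have hdx : d ≤ x / 2 := by nlinarith [Real.sq_sqrt hx0.le]
    have hxd0 : 0 < x - d := by linarith
    have hxc : (0:ℝ) < x ^ c := Real.rpow_pos_of_pos hx0 c
    have i1 : IntervalIntegrable (fun s => Real.exp s * s ^ c) volume 0 (x - d) :=
      aux_int1 hc _ _
    have i2 : IntervalIntegrable (fun s => Real.exp s * s ^ c) volume (x - d) x :=
      aux_int1 hc _ _
    have isplit : ∫ s in (0:ℝ)..x, Real.exp s * s ^ c
        = (∫ s in (0:ℝ)..(x - d), Real.exp s * s ^ c)
          + ∫ s in (x - d)..x, Real.exp s * s ^ c :=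
      (intervalIntegral.integral_add_adjacent_intervals i1 i2).symm
    have hmid : x ^ c * (Real.exp x - Real.exp (x - d))
        ≤ ∫ s in (x - d)..x, Real.exp s * s ^ c := by
      have hmono : ∫ s in (x - d)..x, x ^ c * Real.exp s
          ≤ ∫ s in (x - d)..x, Real.exp s * s ^ c := by
        apply intervalIntegral.integral_mono_on (by linarith)
          ((continuous_const.mul Real.continuous_exp).intervalIntegrable _ _) i2
        intro s hs
        have hs0 : 0 < s := lt_of_lt_of_le hxd0 hs.1
        have hsx : x ^ c ≤ s ^ c := Real.rpow_le_rpow_of_nonpos hs0 hs.2 hc0.le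
        show x ^ c * Real.exp s ≤ Real.exp s * s ^ c
        nlinarith [Real.exp_pos s]
      calc x ^ c * (Real.exp x - Real.exp (x - d))
          = ∫ s in (x - d)..x, x ^ c * Real.exp s := by
            rw [intervalIntegral.integral_const_mul, integral_exp]
        _ ≤ _ := hmono
    have hleft : (0:ℝ) ≤ ∫ s in (0:ℝ)..(x - d), Real.exp s * s ^ c := by
      apply intervalIntegral.integral_nonneg hxd0.le
      intro u hu
      have : (0:ℝ) ≤ u ^ c := Real.rpow_nonneg hu.1 c
      positivity
    have hFlow : x ^ c * (Real.exp x - Real.exp (x - d))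
        ≤ ∫ s in (0:ℝ)..x, Real.exp s * s ^ c := by
      rw [isplit]; linarith
    have e1 : 1 - Real.exp (-d)
        = Real.exp (-x) * (x ^ c * (Real.exp x - Real.exp (x - d))) / x ^ c := by
      have h2 : Real.exp (-x) * Real.exp x = 1 := by rw [← Real.exp_add]; simp
      have h3 : Real.exp (-x) * Real.exp (x - d) = Real.exp (-d) := by
        rw [← Real.exp_add]; ring_nf
      field_simp
      linear_combination h3 - h2
    rw [e1]
    gcongr
  have hup : ∀ᶠ x : ℝ in atTop,
      Real.exp (-x) * (∫ s in (0:ℝ)..x, Real.exp s * s ^ c) / x ^ c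
      ≤ Real.exp (-Real.sqrt x) * (x / (c + 1)) + ((x - Real.sqrt x) / x) ^ c := by
    filter_upwards [eventually_ge_atTop (4:ℝ)] with x hx4
    set d := Real.sqrt x with hd
    have hx0 : (0:ℝ) < x := by linarith
    have hd0 : 0 ≤ d := Real.sqrt_nonneg x
    have hd2 : 2 ≤ d := by
      rw [hd, show (2:ℝ) = Real.sqrt 4 by
        rw [show (4:ℝ) = 2 ^ 2 by norm_num, Real.sqrt_sq]; norm_num]
      exact Real.sqrt_le_sqrt hx4
    have hdx : d ≤ x / 2 := by nlinarith [Real.sq_sqrt hx0.le]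
    have hxd0 : 0 < x - d := by linarith
    have hxc : (0:ℝ) < x ^ c := Real.rpow_pos_of_pos hx0 c
    have i1 : IntervalIntegrable (fun s => Real.exp s * s ^ c) volume 0 (x - d) :=
      aux_int1 hc _ _
    have i2 : IntervalIntegrable (fun s => Real.exp s * s ^ c) volume (x - d) x :=
      aux_int1 hc _ _
    have isplit : ∫ s in (0:ℝ)..x, Real.exp s * s ^ c
        = (∫ s in (0:ℝ)..(x - d), Real.exp s * s ^ c)
          + ∫ s in (x - d)..x, Real.exp s * s ^ c :=
      (intervalIntegral.integral_add_adjacent_intervals i1 i2).symm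
    -- bound the first piece
    have hub1 : ∫ s in (0:ℝ)..(x - d), Real.exp s * s ^ c
        ≤ Real.exp (x - d) * ((x - d) ^ (c + 1) / (c + 1)) := by
      have hmono : ∫ s in (0:ℝ)..(x - d), Real.exp s * s ^ c
          ≤ ∫ s in (0:ℝ)..(x - d), Real.exp (x - d) * s ^ c := by
        apply intervalIntegral.integral_mono_on hxd0.le i1
          ((intervalIntegral.intervalIntegrable_rpow' hc).const_mul _)
        intro s hs
        have h1 : (0:ℝ) ≤ s ^ c := Real.rpow_nonneg hs.1 c
        have h2 : Real.exp s ≤ Real.exp (x - d) := Real.exp_le_exp.2 hs.2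
        nlinarith
      calc ∫ s in (0:ℝ)..(x - d), Real.exp s * s ^ c ≤ _ := hmono
        _ = Real.exp (x - d) * ((x - d) ^ (c + 1) / (c + 1)) := by
            rw [intervalIntegral.integral_const_mul, integral_rpow (Or.inl hc)]
            rw [Real.zero_rpow hc1.ne']
            ring
    -- bound the second piece
    have hub2 : ∫ s in (x - d)..x, Real.exp s * s ^ c ≤ (x - d) ^ c * Real.exp x := by
      have hmono : ∫ s in (x - d)..x, Real.exp s * s ^ c
          ≤ ∫ s in (x - d)..x, (x - d) ^ c * Real.exp s := by
        apply intervalIntegral.integral_mono_on (by linarith) i2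
          ((continuous_const.mul Real.continuous_exp).intervalIntegrable _ _)
        intro s hs
        have hsc : s ^ c ≤ (x - d) ^ c :=
          Real.rpow_le_rpow_of_nonpos hxd0 hs.1 hc0.le
        show Real.exp s * s ^ c ≤ (x - d) ^ c * Real.exp s
        nlinarith [Real.exp_pos s]
      calc ∫ s in (x - d)..x, Real.exp s * s ^ c ≤ _ := hmono
        _ = (x - d) ^ c * (Real.exp x - Real.exp (x - d)) := by
            rw [intervalIntegral.integral_const_mul, integral_exp]
        _ ≤ (x - d) ^ c * Real.exp x := by
            have h1 : (0:ℝ) ≤ (x - d) ^ c := Real.rpow_nonneg hxd0.le c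
            nlinarith [Real.exp_pos (x - d)]
    have hFup : ∫ s in (0:ℝ)..x, Real.exp s * s ^ c
        ≤ Real.exp (x - d) * ((x - d) ^ (c + 1) / (c + 1)) + (x - d) ^ c * Real.exp x := by
      rw [isplit]; linarith
    have step1 : Real.exp (-x) * (∫ s in (0:ℝ)..x, Real.exp s * s ^ c) / x ^ c
        ≤ Real.exp (-x) * (Real.exp (x - d) * ((x - d) ^ (c + 1) / (c + 1))
            + (x - d) ^ c * Real.exp x) / x ^ c := by
      gcongr
    refine step1.trans ?_
    have h2 : Real.exp (-x) * Real.exp x = 1 := by rw [← Real.exp_add]; simp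
    have h3 : Real.exp (-x) * Real.exp (x - d) = Real.exp (-d) := by
      rw [← Real.exp_add]; ring_nf
    have expand : Real.exp (-x) * (Real.exp (x - d) * ((x - d) ^ (c + 1) / (c + 1))
          + (x - d) ^ c * Real.exp x) / x ^ c
        = (Real.exp (-x) * Real.exp (x - d)) * ((x - d) ^ (c + 1) / ((c + 1) * x ^ c))
          + (x - d) ^ c / x ^ c * (Real.exp (-x) * Real.exp x) := by
      field_simp
    rw [expand, h2, h3, mul_one, ← Real.div_rpow hxd0.le hx0.le]
    have hxc1 : (x - d) ^ (c + 1) ≤ x ^ (c + 1) :=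
      Real.rpow_le_rpow hxd0.le (by linarith) hc1.le
    have hxx : x ^ (c + 1) = x ^ c * x := Real.rpow_add_one hx0.ne' c
    have key : (x - d) ^ (c + 1) / ((c + 1) * x ^ c) ≤ x / (c + 1) := by
      rw [div_le_div_iff₀ (by positivity) hc1]
      calc (x - d) ^ (c + 1) * (c + 1) ≤ x ^ (c + 1) * (c + 1) := by nlinarith
        _ = x * ((c + 1) * x ^ c) := by rw [hxx]; ring
    have hmul := mul_le_mul_of_nonneg_left key (Real.exp_pos (-d)).le
    linarith
  -- limits of the bounding functions
  have hl : Tendsto (fun x : ℝ => 1 - Real.exp (-Real.sqrt x)) atTop (nhds 1) := by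
    have h := Real.tendsto_exp_neg_atTop_nhds_zero.comp sqrt_tendsto_atTop
    have h2 := (tendsto_const_nhds (α := ℝ) (x := (1:ℝ))).sub h
    rw [sub_zero] at h2
    exact h2
  have hu : Tendsto (fun x : ℝ => Real.exp (-Real.sqrt x) * (x / (c + 1))
      + ((x - Real.sqrt x) / x) ^ c) atTop (nhds 1) := by
    have h1 : Tendsto (fun x : ℝ => Real.exp (-Real.sqrt x) * (x / (c + 1))) atTop (nhds 0) := by
      have hg : Tendsto (fun t : ℝ => t ^ (2:ℝ) * Real.exp (-1 * t) / (c + 1)) atTop (nhds 0) := by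
        simpa using (tendsto_rpow_mul_exp_neg_mul_atTop_nhds_zero 2 1 one_pos).div_const (c + 1)
      have h := hg.comp sqrt_tendsto_atTop
      apply h.congr'
      filter_upwards [eventually_ge_atTop (0:ℝ)] with x hx
      simp only [Function.comp]
      rw [show ((2:ℝ)) = ((2:ℕ):ℝ) by norm_num, Real.rpow_natCast, Real.sq_sqrt hx]
      ring
    have h2 : Tendsto (fun x : ℝ => ((x - Real.sqrt x) / x) ^ c) atTop (nhds 1) := by
      have hs : Tendsto (fun x : ℝ => Real.sqrt x / x) atTop (nhds 0) := by
        have h := tendsto_inv_atTop_zero.comp sqrt_tendsto_atTop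
        apply h.congr
        intro x
        simp only [Function.comp]
        rw [Real.sqrt_div_self', one_div]
      have hb : Tendsto (fun x : ℝ => (x - Real.sqrt x) / x) atTop (nhds 1) := by
        have h := (tendsto_const_nhds (α := ℝ) (x := (1:ℝ))).sub hs
        rw [sub_zero] at h
        apply h.congr'
        filter_upwards [eventually_gt_atTop (0:ℝ)] with x hx
        rw [sub_div, div_self hx.ne']
      have hcont : ContinuousAt (fun t : ℝ => t ^ c) 1 :=
        Real.continuousAt_rpow_const 1 c (Or.inl one_ne_zero)
      have := hcont.tendsto.comp hb
      simpa [Real.one_rpow, Function.comp_def] using this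
    have := h1.add h2
    simpa using this
  exact tendsto_of_tendsto_of_tendsto_of_le_of_le' hl hu hlow hup

lemma asymp2 {c : ℝ} (hc : -1 < c) (hc0 : c < 0) :
    Tendsto (fun y => Real.exp y * (∫ s in Ioi y, Real.exp (-s) * s ^ c) / y ^ c)
      atTop (nhds 1) := by
  have hup : ∀ᶠ y : ℝ in atTop,
      Real.exp y * (∫ s in Ioi y, Real.exp (-s) * s ^ c) / y ^ c ≤ 1 := by
    filter_upwards [eventually_ge_atTop (1:ℝ)] with y hy1
    have hy0 : (0:ℝ) < y := by linarith
    have hyc : (0:ℝ) < y ^ c := Real.rpow_pos_of_pos hy0 c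
    have hI : IntegrableOn (fun s => Real.exp (-s) * s ^ c) (Ioi y) := aux_int3 hc hy0.le
    have hI' : IntegrableOn (fun s : ℝ => Real.exp (-s) * y ^ c) (Ioi y) := by
      have h := exp_neg_integrableOn_Ioi y (b := 1) one_pos
      exact (h.congr_fun (fun s _ => by norm_num) measurableSet_Ioi).mul_const _
    have hmono : ∫ s in Ioi y, Real.exp (-s) * s ^ c
        ≤ ∫ s in Ioi y, Real.exp (-s) * y ^ c := by
      apply setIntegral_mono_on hI hI' measurableSet_Ioi
      intro s hs
      have hsc : s ^ c ≤ y ^ c :=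
        Real.rpow_le_rpow_of_nonpos hy0 (le_of_lt hs) hc0.le
      nlinarith [Real.exp_pos (-s)]
    have hval : ∫ s in Ioi y, Real.exp (-s) * y ^ c = Real.exp (-y) * y ^ c := by
      rw [integral_mul_const, integral_exp_neg_Ioi]
    have key : Real.exp y * (∫ s in Ioi y, Real.exp (-s) * s ^ c) / y ^ c
        ≤ Real.exp y * (Real.exp (-y) * y ^ c) / y ^ c := by
      gcongr
      rw [← hval]; exact hmono
    refine key.trans ?_
    have h2 : Real.exp y * Real.exp (-y) = 1 := by rw [← Real.exp_add]; simp
    rw [show Real.exp y * (Real.exp (-y) * y ^ c) / y ^ c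
        = Real.exp y * Real.exp (-y) * (y ^ c / y ^ c) by ring, h2, div_self hyc.ne']
    norm_num
  have hlow : ∀ᶠ y : ℝ in atTop,
      ((y + Real.sqrt y) / y) ^ c * (1 - Real.exp (-Real.sqrt y))
      ≤ Real.exp y * (∫ s in Ioi y, Real.exp (-s) * s ^ c) / y ^ c := by
    filter_upwards [eventually_ge_atTop (1:ℝ)] with y hy1
    have hy0 : (0:ℝ) < y := by linarith
    set d := Real.sqrt y with hd
    have hd0 : 0 < d := Real.sqrt_pos.2 hy0
    have hyc : (0:ℝ) < y ^ c := Real.rpow_pos_of_pos hy0 c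
    have hI : IntegrableOn (fun s => Real.exp (-s) * s ^ c) (Ioi y) := aux_int3 hc hy0.le
    have hstep1 : ∫ s in Ioc y (y + d), Real.exp (-s) * s ^ c
        ≤ ∫ s in Ioi y, Real.exp (-s) * s ^ c := by
      apply setIntegral_mono_set hI
      · rw [EventuallyLE, ae_restrict_iff' measurableSet_Ioi]
        filter_upwards with s hs
        have : (0:ℝ) ≤ s ^ c := Real.rpow_nonneg (le_of_lt (lt_trans hy0 hs)) c
        positivity
      · exact HasSubset.Subset.eventuallyLE Ioc_subset_Ioi_self
    have hstep2 : (y + d) ^ c * (Real.exp (-y) - Real.exp (-(y + d)))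
        ≤ ∫ s in Ioc y (y + d), Real.exp (-s) * s ^ c := by
      rw [← intervalIntegral.integral_of_le (by linarith : y ≤ y + d)]
      have hmono : ∫ s in y..(y + d), Real.exp (-s) * (y + d) ^ c
          ≤ ∫ s in y..(y + d), Real.exp (-s) * s ^ c := by
        have hcont : Continuous fun s : ℝ => Real.exp (-s) := by continuity
        apply intervalIntegral.integral_mono_on (by linarith)
          ((hcont.mul continuous_const).intervalIntegrable _ _)
          (aux_int2 hc _ _)
        intro s hs
        have hs0 : 0 < s := lt_of_lt_of_le hy0 hs.1
        have hsc : (y + d) ^ c ≤ s ^ c :=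
          Real.rpow_le_rpow_of_nonpos hs0 hs.2 hc0.le
        show Real.exp (-s) * (y + d) ^ c ≤ Real.exp (-s) * s ^ c
        nlinarith [Real.exp_pos (-s)]
      calc (y + d) ^ c * (Real.exp (-y) - Real.exp (-(y + d)))
          = ∫ s in y..(y + d), Real.exp (-s) * (y + d) ^ c := by
            rw [intervalIntegral.integral_mul_const, integral_exp_neg_interval]
            ring
        _ ≤ _ := hmono
    have e2 : ((y + d) / y) ^ c * (1 - Real.exp (-d))
        = Real.exp y * ((y + d) ^ c * (Real.exp (-y) - Real.exp (-(y + d)))) / y ^ c := by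
      have ha : Real.exp y * Real.exp (-y) = 1 := by rw [← Real.exp_add]; simp
      have hb : Real.exp y * Real.exp (-(y + d)) = Real.exp (-d) := by
        rw [← Real.exp_add]; ring_nf
      rw [show Real.exp y * ((y + d) ^ c * (Real.exp (-y) - Real.exp (-(y + d)))) / y ^ c
          = (y + d) ^ c / y ^ c
            * (Real.exp y * Real.exp (-y) - Real.exp y * Real.exp (-(y + d))) by ring,
        ha, hb, ← Real.div_rpow (by linarith) hy0.le]
    rw [e2]
    gcongr
    exact hstep2.trans hstep1
  have hlowlim : Tendsto (fun y : ℝ =>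
      ((y + Real.sqrt y) / y) ^ c * (1 - Real.exp (-Real.sqrt y))) atTop (nhds 1) := by
    have hs : Tendsto (fun y : ℝ => Real.sqrt y / y) atTop (nhds 0) := by
      have h := tendsto_inv_atTop_zero.comp sqrt_tendsto_atTop
      apply h.congr
      intro x
      simp only [Function.comp]
      rw [Real.sqrt_div_self', one_div]
    have hb : Tendsto (fun y : ℝ => (y + Real.sqrt y) / y) atTop (nhds 1) := by
      have h := (tendsto_const_nhds (α := ℝ) (x := (1:ℝ))).add hs
      rw [add_zero] at h
      apply h.congr'
      filter_upwards [eventually_gt_atTop (0:ℝ)] with y hy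
      rw [add_div, div_self hy.ne']
    have h1 : Tendsto (fun y : ℝ => ((y + Real.sqrt y) / y) ^ c) atTop (nhds 1) := by
      have hcont : ContinuousAt (fun t : ℝ => t ^ c) 1 :=
        Real.continuousAt_rpow_const 1 c (Or.inl one_ne_zero)
      have := hcont.tendsto.comp hb
      simpa [Real.one_rpow, Function.comp_def] using this
    have h2 : Tendsto (fun y : ℝ => 1 - Real.exp (-Real.sqrt y)) atTop (nhds 1) := by
      have h := Real.tendsto_exp_neg_atTop_nhds_zero.comp sqrt_tendsto_atTop
      have h2 := (tendsto_const_nhds (α := ℝ) (x := (1:ℝ))).sub h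
      rw [sub_zero] at h2
      exact h2
    have := h1.mul h2
    simpa using this
  exact tendsto_of_tendsto_of_tendsto_of_le_of_le' hlowlim tendsto_const_nhds hlow hup

theorem stmt_1 (H α β : ℝ) (hH : H ∈ Set.Ioo (1/2 : ℝ) 1) (hα : 0 < α) (hβ : 0 < β) :
    Filter.Tendsto
      (fun x : ℝ =>
        (α ^ (1 - 2 * H) * fH1 H (α * x) + β ^ (1 - 2 * H) * fH2 H (β * x)) /
          ((α + β) / (α * β) * (2 * H - 1) * x ^ (2 * H - 2)))
      Filter.atTop (nhds 1) := by
  obtain ⟨hH1, hH2⟩ := hH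
  set r : ℝ := 2 * H - 1 with hr
  have hr0 : 0 < r := by rw [hr]; linarith
  have hr1 : r < 1 := by rw [hr]; linarith
  have hrc : (-1:ℝ) < r - 1 := by linarith
  have hrc0 : r - 1 < 0 := by linarith
  set Γ : ℝ := Real.Gamma (2 * H) with hΓ
  set K : ℝ := (α + β) / (α * β) * r with hK
  have hK0 : 0 < K := by
    rw [hK]; positivity
  -- component limits
  have htα : Tendsto (fun x : ℝ => α * x) atTop atTop :=
    Tendsto.const_mul_atTop hα tendsto_id
  have htβ : Tendsto (fun x : ℝ => β * x) atTop atTop :=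
    Tendsto.const_mul_atTop hβ tendsto_id
  have hA : Tendsto (fun x : ℝ => Real.exp (-(α * x))
      * (∫ s in (0:ℝ)..(α * x), Real.exp s * s ^ (r - 1)) / (α * x) ^ (r - 1))
      atTop (nhds 1) := by
    have := (asymp1 hrc hrc0).comp htα
    simpa [Function.comp_def] using this
  have hB : Tendsto (fun x : ℝ => Real.exp (β * x)
      * (∫ s in Ioi (β * x), Real.exp (-s) * s ^ (r - 1)) / (β * x) ^ (r - 1))
      atTop (nhds 1) := by
    have := (asymp2 hrc hrc0).comp htβ
    simpa [Function.comp_def] using this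
  have hE : Tendsto (fun x : ℝ => x ^ (1 - r) * Real.exp (-(α * x))) atTop (nhds 0) := by
    have := tendsto_rpow_mul_exp_neg_mul_atTop_nhds_zero (1 - r) α hα
    simpa [neg_mul] using this
  -- the comparison function
  have hΦ : Tendsto (fun x : ℝ =>
      (Γ * α ^ (-r) * (x ^ (1 - r) * Real.exp (-(α * x)))
        + r * α⁻¹ * (Real.exp (-(α * x))
            * (∫ s in (0:ℝ)..(α * x), Real.exp s * s ^ (r - 1)) / (α * x) ^ (r - 1))
        + r * β⁻¹ * (Real.exp (β * x)
            * (∫ s in Ioi (β * x), Real.exp (-s) * s ^ (r - 1)) / (β * x) ^ (r - 1))) / K)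
      atTop (nhds ((Γ * α ^ (-r) * 0 + r * α⁻¹ * 1 + r * β⁻¹ * 1) / K)) :=
    (((tendsto_const_nhds (x := Γ * α ^ (-r))).mul hE).add
      (hA.const_mul (r * α⁻¹)) |>.add (hB.const_mul (r * β⁻¹))).div_const K
  have hval : (Γ * α ^ (-r) * 0 + r * α⁻¹ * 1 + r * β⁻¹ * 1) / K = 1 := by
    rw [mul_zero, zero_add, mul_one, mul_one, hK, div_eq_one_iff_eq (by positivity)]
    field_simp
    ring
  rw [hval] at hΦ
  refine Tendsto.congr' ?_ hΦ
  filter_upwards [eventually_gt_atTop (0:ℝ)] with x hx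
  have hαx : 0 < α * x := by positivity
  have hβx : 0 < β * x := by positivity
  -- unfold fH1 and fH2 using the integration by parts identities
  have h1 : fH1 H (α * x) = Real.exp (-(α * x)) * Γ - (α * x) ^ r
      + r * (Real.exp (-(α * x)) * ∫ s in (0:ℝ)..(α * x), Real.exp s * s ^ (r - 1)) := by
    rw [fH1, ← hΓ, show (2:ℝ) * H - 1 = r from hr.symm, ibp1 hr0 hr1 hαx.le]
    have he : Real.exp (-(α * x)) * Real.exp (α * x) = 1 := by rw [← Real.exp_add]; simp
    linear_combination (-(α * x) ^ r) * he
  have h2 : fH2 H (β * x) = (β * x) ^ r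
      + r * (Real.exp (β * x) * ∫ s in Ioi (β * x), Real.exp (-s) * s ^ (r - 1)) := by
    rw [fH2, ← hΓ, show (2:ℝ) * H - 1 = r from hr.symm,
      show Γ = Real.Gamma (r + 1) by rw [hΓ, hr]; norm_num,
      gamma_split hr0 hβx.le, ibp2 hr0 hr1 hβx]
    have he : Real.exp (β * x) * Real.exp (-(β * x)) = 1 := by rw [← Real.exp_add]; simp
    linear_combination ((β * x) ^ r) * he
  -- denominator
  have hD : (α + β) / (α * β) * (2 * H - 1) * x ^ (2 * H - 2) = K * x ^ (r - 1) := by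
    rw [hK, show (2:ℝ) * H - 2 = r - 1 by rw [hr]; ring, ← hr]
  -- numerator identity
  have hxr : (0:ℝ) < x ^ (r - 1) := Real.rpow_pos_of_pos hx _
  have hnum : α ^ (1 - 2 * H) * fH1 H (α * x) + β ^ (1 - 2 * H) * fH2 H (β * x)
      = (Γ * α ^ (-r) * (x ^ (1 - r) * Real.exp (-(α * x)))
        + r * α⁻¹ * (Real.exp (-(α * x))
            * (∫ s in (0:ℝ)..(α * x), Real.exp s * s ^ (r - 1)) / (α * x) ^ (r - 1))
        + r * β⁻¹ * (Real.exp (β * x)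
            * (∫ s in Ioi (β * x), Real.exp (-s) * s ^ (r - 1)) / (β * x) ^ (r - 1)))
        * x ^ (r - 1) := by
    rw [h1, h2, show (1:ℝ) - 2 * H = -r by rw [hr]; ring]
    rw [Real.mul_rpow hα.le hx.le, Real.mul_rpow hβ.le hx.le,
      Real.mul_rpow hα.le hx.le, Real.mul_rpow hβ.le hx.le]
    rw [Real.rpow_neg hα.le, Real.rpow_neg hβ.le]
    rw [show r - 1 = r - 1 from rfl]
    have hsubα : α ^ (r - 1) = α ^ r / α := by
      rw [Real.rpow_sub hα, Real.rpow_one]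
    have hsubβ : β ^ (r - 1) = β ^ r / β := by
      rw [Real.rpow_sub hβ, Real.rpow_one]
    have hsubx : x ^ (r - 1) = x ^ r / x := by
      rw [Real.rpow_sub hx, Real.rpow_one]
    have hsubx' : x ^ (1 - r) = x / x ^ r := by
      rw [Real.rpow_sub hx, Real.rpow_one]
    rw [hsubα, hsubβ, hsubx, hsubx']
    have hαr : (0:ℝ) < α ^ r := Real.rpow_pos_of_pos hα r
    have hβr : (0:ℝ) < β ^ r := Real.rpow_pos_of_pos hβ r
    have hxrr : (0:ℝ) < x ^ r := Real.rpow_pos_of_pos hx r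
    field_simp
    ring
  rw [hnum, hD, div_eq_div_iff hK0.ne' (mul_pos hK0 hxr).ne']
  ring
end

section
/- Let H ∈ (1/2, 1). Then f_H(x) − f_H(0) = f_H(x) − 2Γ(2H) = −x^{2H}/H + o(x^{2H}) as x → 0⁺; that is, (f_H(x) − 2Γ(2H) + x^{2H}/H)/x^{2H} → 0 as x → 0⁺. -/
open MeasureTheory Real Filter Finset

lemma cosh_aux {u : ℝ} (h0 : 0 ≤ u) (h1 : u ≤ 1) :
    0 ≤ Real.exp u + Real.exp (-u) - 2 ∧
      Real.exp u + Real.exp (-u) - 2 ≤ (Real.exp 1) ^ 2 * u ^ 2 := by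
  have hinv : Real.exp u * Real.exp (-u) = 1 := by
    rw [← Real.exp_add]; simp
  have hy1 : 1 ≤ Real.exp u := Real.one_le_exp h0
  have hye : Real.exp u ≤ Real.exp 1 := Real.exp_le_exp.mpr h1
  have hz : 0 < Real.exp (-u) := Real.exp_pos _
  have hz1 : Real.exp (-u) ≤ 1 := by
    have := Real.exp_le_exp.mpr (neg_nonpos.mpr h0)
    simpa using this
  have hub : Real.exp u - 1 ≤ u * Real.exp u := by
    have h := Real.add_one_le_exp (-u)
    nlinarith [Real.exp_pos u]
  have key : Real.exp u + Real.exp (-u) - 2 = Real.exp (-u) * (Real.exp u - 1) ^ 2 := by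
    linear_combination (2 - Real.exp u) * hinv
  constructor
  · rw [key]
    positivity
  · rw [key]
    have h1' : Real.exp u - 1 ≤ u * Real.exp 1 :=
      le_trans hub (mul_le_mul_of_nonneg_left hye h0)
    have hsq : (Real.exp u - 1) ^ 2 ≤ (u * Real.exp 1) ^ 2 :=
      pow_le_pow_left₀ (by linarith) h1' 2
    nlinarith [sq_nonneg (Real.exp u - 1)]

lemma fH_key (H : ℝ) (hH : H ∈ Set.Ioo (1/2 : ℝ) 1) (x : ℝ) :
    fH H x - 2 * Real.Gamma (2 * H) + x ^ (2 * H) / H =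
      Real.Gamma (2 * H) * (Real.exp x + Real.exp (-x) - 2) -
        ∫ s in (0:ℝ)..x, (Real.exp (s - x) + Real.exp (x - s) - 2) * s ^ (2 * H - 1) := by
  obtain ⟨hH1, hH2⟩ := hH
  have hc : (0:ℝ) < 2 * H - 1 := by linarith
  have hcont : Continuous fun s : ℝ => s ^ (2 * H - 1) :=
    Real.continuous_rpow_const hc.le
  have int1 : IntervalIntegrable (fun s => Real.exp (s - x) * s ^ (2 * H - 1)) volume 0 x :=
    ((Real.continuous_exp.comp (continuous_id.sub continuous_const)).mul hcont).intervalIntegrable 0 x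
  have int2 : IntervalIntegrable (fun s => Real.exp (x - s) * s ^ (2 * H - 1)) volume 0 x :=
    ((Real.continuous_exp.comp (continuous_const.sub continuous_id)).mul hcont).intervalIntegrable 0 x
  have int3 : IntervalIntegrable (fun s : ℝ => s ^ (2 * H - 1)) volume 0 x :=
    hcont.intervalIntegrable 0 x
  have e1 : Real.exp (-x) * ∫ s in (0:ℝ)..x, Real.exp s * s ^ (2 * H - 1) =
      ∫ s in (0:ℝ)..x, Real.exp (s - x) * s ^ (2 * H - 1) := by
    rw [← intervalIntegral.integral_const_mul]
    apply intervalIntegral.integral_congr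
    intro s _
    simp only
    rw [← mul_assoc, ← Real.exp_add]
    ring_nf
  have e2 : Real.exp x * ∫ s in (0:ℝ)..x, Real.exp (-s) * s ^ (2 * H - 1) =
      ∫ s in (0:ℝ)..x, Real.exp (x - s) * s ^ (2 * H - 1) := by
    rw [← intervalIntegral.integral_const_mul]
    apply intervalIntegral.integral_congr
    intro s _
    simp only
    rw [← mul_assoc, ← Real.exp_add]
    ring_nf
  have e3 : (∫ s in (0:ℝ)..x, s ^ (2 * H - 1)) = x ^ (2 * H) / (2 * H) := by
    rw [integral_rpow (Or.inl (by linarith : (-1:ℝ) < 2 * H - 1))]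
    rw [show 2 * H - 1 + 1 = 2 * H by ring, Real.zero_rpow (by linarith), sub_zero]
  have e4 : (∫ s in (0:ℝ)..x, (Real.exp (s - x) + Real.exp (x - s) - 2) * s ^ (2 * H - 1)) =
      (∫ s in (0:ℝ)..x, Real.exp (s - x) * s ^ (2 * H - 1)) +
        (∫ s in (0:ℝ)..x, Real.exp (x - s) * s ^ (2 * H - 1)) -
        2 * (x ^ (2 * H) / (2 * H)) := by
    rw [← e3, ← intervalIntegral.integral_const_mul, ← intervalIntegral.integral_add int1 int2,
      ← intervalIntegral.integral_sub (int1.add int2) (int3.const_mul 2)]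
    apply intervalIntegral.integral_congr
    intro s _
    simp only
    ring
  have hH0 : H ≠ 0 := by linarith
  have h5 : x ^ (2 * H) / H = 2 * (x ^ (2 * H) / (2 * H)) := by
    field_simp
  simp only [fH, fH1, fH2]
  rw [e4, ← e1, ← e2, h5]
  ring

theorem stmt_3 (H : ℝ) (hH : H ∈ Set.Ioo (1/2 : ℝ) 1) :
    fH H 0 = 2 * Real.Gamma (2 * H) ∧
    Filter.Tendsto
      (fun x : ℝ => (fH H x - 2 * Real.Gamma (2 * H) + x ^ (2 * H) / H) / x ^ (2 * H))
      (nhdsWithin 0 (Set.Ioi 0)) (nhds 0) := by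
  obtain ⟨hH1, hH2⟩ := hH
  have hG : 0 < Real.Gamma (2 * H) := Real.Gamma_pos_of_pos (by linarith)
  constructor
  · simp [fH, fH1, fH2]
    ring
  · set G := Real.Gamma (2 * H) with hGdef
    set C := (Real.exp 1) ^ 2 * (G + 1) with hCdef
    have hbound : ∀ᶠ x in nhdsWithin (0:ℝ) (Set.Ioi 0),
        ‖(fH H x - 2 * G + x ^ (2 * H) / H) / x ^ (2 * H)‖ ≤ C * x ^ (2 - 2 * H) := by
      filter_upwards [Ioo_mem_nhdsGT_of_mem (by norm_num : (0:ℝ) ∈ Set.Ico (0:ℝ) 1)]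
        with x hx
      obtain ⟨hx0, hx1⟩ := hx
      have hxp : (0:ℝ) < x ^ (2 * H) := Real.rpow_pos_of_pos hx0 _
      rw [Real.norm_eq_abs, abs_div, abs_of_pos hxp, div_le_iff₀ hxp, mul_assoc]
      have hxx : x ^ (2 - 2 * H) * x ^ (2 * H) = x ^ 2 := by
        rw [← Real.rpow_add hx0, show 2 - 2 * H + 2 * H = (2:ℝ) by ring, Real.rpow_two]
      rw [hxx, fH_key H ⟨hH1, hH2⟩ x]
      -- bound the integral term
      have hIbound : ‖∫ s in (0:ℝ)..x, (Real.exp (s - x) + Real.exp (x - s) - 2) * s ^ (2 * H - 1)‖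
          ≤ ((Real.exp 1) ^ 2 * x ^ 2 * x ^ (2 * H - 1)) * |x - 0| := by
        apply intervalIntegral.norm_integral_le_of_norm_le_const
        intro s hs
        rw [Set.uIoc_of_le hx0.le] at hs
        obtain ⟨hs0, hsx⟩ := hs
        have hu0 : 0 ≤ x - s := by linarith
        have hu1 : x - s ≤ 1 := by linarith
        obtain ⟨hw0, hw1⟩ := cosh_aux hu0 hu1
        have hes : Real.exp (s - x) = Real.exp (-(x - s)) := by ring_nf
        have hw0' : 0 ≤ Real.exp (s - x) + Real.exp (x - s) - 2 := by
          rw [hes]; linarith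
        have hwb : Real.exp (s - x) + Real.exp (x - s) - 2 ≤ (Real.exp 1) ^ 2 * x ^ 2 := by
          rw [hes]
          have hxs : (x - s) ^ 2 ≤ x ^ 2 := by nlinarith
          nlinarith [hw1, hxs, sq_nonneg (Real.exp 1)]
        have hsb : s ^ (2 * H - 1) ≤ x ^ (2 * H - 1) :=
          Real.rpow_le_rpow hs0.le hsx (by linarith)
        rw [Real.norm_eq_abs, abs_mul, abs_of_nonneg hw0',
          abs_of_nonneg (Real.rpow_nonneg hs0.le _)]
        exact mul_le_mul hwb hsb (Real.rpow_nonneg hs0.le _)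
          (by positivity)
      have hxabs : |x - 0| = x := by rw [sub_zero, abs_of_pos hx0]
      have hpow : x ^ (2 * H - 1) * x = x ^ (2 * H) := by
        have h := Real.rpow_add_one hx0.ne' (2 * H - 1)
        rw [show 2 * H - 1 + 1 = 2 * H by ring] at h
        exact h.symm
      rw [hxabs] at hIbound
      have hIbound' : |∫ s in (0:ℝ)..x, (Real.exp (s - x) + Real.exp (x - s) - 2) * s ^ (2 * H - 1)|
          ≤ (Real.exp 1) ^ 2 * x ^ 2 * x ^ (2 * H) := by
        calc |∫ s in (0:ℝ)..x, (Real.exp (s - x) + Real.exp (x - s) - 2) * s ^ (2 * H - 1)|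
            ≤ ((Real.exp 1) ^ 2 * x ^ 2 * x ^ (2 * H - 1)) * x := hIbound
          _ = (Real.exp 1) ^ 2 * x ^ 2 * (x ^ (2 * H - 1) * x) := by ring
          _ = (Real.exp 1) ^ 2 * x ^ 2 * x ^ (2 * H) := by rw [hpow]
      -- bound the Gamma term
      obtain ⟨hw0, hw1⟩ := cosh_aux hx0.le hx1.le
      have hGterm : |G * (Real.exp x + Real.exp (-x) - 2)| ≤ G * ((Real.exp 1) ^ 2 * x ^ 2) := by
        rw [abs_mul, abs_of_pos hG, abs_of_nonneg hw0]
        exact mul_le_mul_of_nonneg_left hw1 hG.le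
      have hone : x ^ (2 * H) ≤ 1 :=
        Real.rpow_le_one hx0.le hx1.le (by linarith)
      calc |G * (Real.exp x + Real.exp (-x) - 2) -
              ∫ s in (0:ℝ)..x, (Real.exp (s - x) + Real.exp (x - s) - 2) * s ^ (2 * H - 1)|
          ≤ |G * (Real.exp x + Real.exp (-x) - 2)| +
              |∫ s in (0:ℝ)..x, (Real.exp (s - x) + Real.exp (x - s) - 2) * s ^ (2 * H - 1)| :=
            abs_sub _ _
        _ ≤ C * x ^ 2 := by
            rw [hCdef]
            nlinarith [sq_nonneg x, sq_nonneg (Real.exp 1), hxp,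
              mul_nonneg (mul_nonneg (sq_nonneg (Real.exp 1)) (sq_nonneg x)) hxp.le]
    have htend : Tendsto (fun x : ℝ => C * x ^ (2 - 2 * H)) (nhdsWithin 0 (Set.Ioi 0)) (nhds 0) := by
      have h0 : Tendsto (fun x : ℝ => x ^ (2 - 2 * H)) (nhds 0) (nhds (0:ℝ)) := by
        have hct := (Real.continuousAt_rpow_const 0 (2 - 2 * H) (Or.inr (by linarith))).tendsto
        rwa [Real.zero_rpow (by linarith : 2 - 2 * H ≠ 0)] at hct
      simpa using (h0.mono_left nhdsWithin_le_nhds).const_mul C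
    exact squeeze_zero_norm' hbound htend
end

section
/- Let H ∈ (1/2, 1) and λ > 0. Then the series ∑_{n=1}^{∞} f_H(λ n) diverges to +∞. (Consequently, since the auto-covariance of a fractional Ornstein–Uhlenbeck process FOU(λ,σ,H) equals σ²H f_H(λ|t|)/(2λ^{2H}), any such process with H > 1/2 has long memory.) -/
open MeasureTheory Real Filter Finset

namespace FHaux

lemma cont_rpow {H : ℝ} (hH : H ∈ Set.Ioo (1/2 : ℝ) 1) :
    Continuous fun s : ℝ => s ^ (2 * H - 1) :=
  Real.continuous_rpow_const (by linarith [hH.1])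

/-- Tail formula: `Γ(2H) − ∫₀ˣ e^{-s} s^{2H-1} ds = ∫_x^∞ e^{-s} s^{2H-1} ds`. -/
lemma tail_eq {H : ℝ} (hH : H ∈ Set.Ioo (1/2 : ℝ) 1) {x : ℝ} (hx : 0 ≤ x) :
    Real.Gamma (2 * H) - (∫ s in (0:ℝ)..x, Real.exp (-s) * s ^ (2 * H - 1))
      = ∫ s in Set.Ioi x, Real.exp (-s) * s ^ (2 * H - 1) := by
  have h2H : (0:ℝ) < 2 * H := by linarith [hH.1]
  have hint : IntegrableOn (fun s : ℝ => Real.exp (-s) * s ^ (2 * H - 1)) (Set.Ioi 0) :=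
    Real.GammaIntegral_convergent h2H
  rw [intervalIntegral.integral_of_le hx, Real.Gamma_eq_integral h2H,
    ← Set.Ioc_union_Ioi_eq_Ioi hx,
    MeasureTheory.setIntegral_union (Set.Ioc_disjoint_Ioi le_rfl) measurableSet_Ioi
      (hint.mono_set Set.Ioc_subset_Ioi_self) (hint.mono_set (Set.Ioi_subset_Ioi hx))]
  ring

lemma integrableOn_exp_neg_Ioi (x : ℝ) :
    IntegrableOn (fun s : ℝ => Real.exp (-s)) (Set.Ioi x) := by
  have := exp_neg_integrableOn_Ioi x (one_pos (α := ℝ))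
  simpa using this

/-- Lower bound `x^{2H-1} ≤ f_H^{(2)}(x)` for `x > 0`. -/
lemma fH2_ge {H : ℝ} (hH : H ∈ Set.Ioo (1/2 : ℝ) 1) {x : ℝ} (hx : 0 < x) :
    x ^ (2 * H - 1) ≤ fH2 H x := by
  have ha : (0:ℝ) ≤ 2 * H - 1 := by linarith [hH.1]
  have h2H : (0:ℝ) < 2 * H := by linarith [hH.1]
  have hint : IntegrableOn (fun s : ℝ => Real.exp (-s) * s ^ (2 * H - 1)) (Set.Ioi 0) :=
    Real.GammaIntegral_convergent h2H
  have key : x ^ (2 * H - 1) * Real.exp (-x)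
      ≤ ∫ s in Set.Ioi x, Real.exp (-s) * s ^ (2 * H - 1) := by
    have h1 : (∫ s in Set.Ioi x, x ^ (2 * H - 1) * Real.exp (-s))
        = x ^ (2 * H - 1) * Real.exp (-x) := by
      rw [MeasureTheory.integral_const_mul, integral_exp_neg_Ioi]
    rw [← h1]
    apply MeasureTheory.setIntegral_mono_on
    · exact (integrableOn_exp_neg_Ioi x).const_mul _
    · exact hint.mono_set (Set.Ioi_subset_Ioi hx.le)
    · exact measurableSet_Ioi
    · intro s hs
      rw [mul_comm]
      exact mul_le_mul_of_nonneg_left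
        (Real.rpow_le_rpow hx.le (le_of_lt hs) ha) (Real.exp_pos _).le
  unfold fH2
  rw [tail_eq hH hx.le]
  calc x ^ (2 * H - 1) = Real.exp x * (x ^ (2 * H - 1) * Real.exp (-x)) := by
        rw [Real.exp_neg]
        field_simp
    _ ≤ Real.exp x * ∫ s in Set.Ioi x, Real.exp (-s) * s ^ (2 * H - 1) :=
        mul_le_mul_of_nonneg_left key (Real.exp_pos _).le

/-- Crude bound: `∫₀ˣ eˢ s^{2H-1} ds ≤ (eˣ - 1) x^{2H-1}` for `x ≥ 0`. -/
lemma int_crude {H : ℝ} (hH : H ∈ Set.Ioo (1/2 : ℝ) 1) {x : ℝ} (hx : 0 ≤ x) :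
    (∫ s in (0:ℝ)..x, Real.exp s * s ^ (2 * H - 1))
      ≤ (Real.exp x - 1) * x ^ (2 * H - 1) := by
  have ha : (0:ℝ) ≤ 2 * H - 1 := by linarith [hH.1]
  have h1 : (∫ s in (0:ℝ)..x, Real.exp s * x ^ (2 * H - 1))
      = (Real.exp x - 1) * x ^ (2 * H - 1) := by
    rw [intervalIntegral.integral_mul_const, integral_exp]
    simp
  rw [← h1]
  apply intervalIntegral.integral_mono_on hx
  · exact (Real.continuous_exp.mul (cont_rpow hH)).intervalIntegrable _ _
  · exact (Real.continuous_exp.mul continuous_const).intervalIntegrable _ _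
  · intro s hs
    exact mul_le_mul_of_nonneg_left
      (Real.rpow_le_rpow hs.1 hs.2 ha) (Real.exp_pos _).le

/-- `f_H(x) ≥ 0` for `x > 0`. -/
lemma fH_nonneg {H : ℝ} (hH : H ∈ Set.Ioo (1/2 : ℝ) 1) {x : ℝ} (hx : 0 < x) :
    0 ≤ fH H x := by
  have h2H : (0:ℝ) < 2 * H := by linarith [hH.1]
  have hG : 0 < Real.Gamma (2 * H) := Real.Gamma_pos_of_pos h2H
  have h1 : Real.exp (-x) * (Real.Gamma (2 * H) - (Real.exp x - 1) * x ^ (2 * H - 1))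
      ≤ fH1 H x := by
    unfold fH1
    apply mul_le_mul_of_nonneg_left _ (Real.exp_pos _).le
    have := int_crude hH hx.le
    linarith
  have h2 := fH2_ge hH hx
  have hxa : (0:ℝ) ≤ x ^ (2 * H - 1) := Real.rpow_nonneg hx.le _
  have he : Real.exp (-x) * Real.exp x = 1 := by
    rw [← Real.exp_add]; simp
  have hkey : -(x ^ (2 * H - 1))
      ≤ Real.exp (-x) * (Real.Gamma (2 * H) - (Real.exp x - 1) * x ^ (2 * H - 1)) := by
    have hepos : (0:ℝ) < Real.exp (-x) := Real.exp_pos _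
    nlinarith [mul_pos hepos hG, mul_nonneg hepos.le hxa]
  unfold fH
  linarith

/-- Bernoulli-type pointwise bound: for `0 ≤ s ≤ x`,
`s^{2H-1} ≤ x^{2H-1} - (2H-1) x^{2H-2} (x - s)`. -/
lemma pointwise_bound {H : ℝ} (hH : H ∈ Set.Ioo (1/2 : ℝ) 1) {x s : ℝ}
    (hx : 0 < x) (hs : 0 ≤ s) :
    s ^ (2 * H - 1) ≤ x ^ (2 * H - 1) - (2 * H - 1) * (x ^ (2 * H - 2) * (x - s)) := by
  have ha0 : (0:ℝ) ≤ 2 * H - 1 := by linarith [hH.1]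
  have ha1 : 2 * H - 1 ≤ 1 := by linarith [hH.2]
  have ht : (0:ℝ) ≤ s / x := div_nonneg hs hx.le
  have hb := rpow_one_add_le_one_add_mul_self (s := s / x - 1) (by linarith) ha0 ha1
  have hre : 1 + (s / x - 1) = s / x := by ring
  rw [hre] at hb
  -- hb : (s / x) ^ (2H-1) ≤ 1 + (2H-1) * (s / x - 1)
  have hsx : s ^ (2 * H - 1) = (s / x) ^ (2 * H - 1) * x ^ (2 * H - 1) := by
    rw [← Real.mul_rpow ht hx.le, div_mul_cancel₀ _ hx.ne']
  have hxa : x ^ (2 * H - 1) = x ^ (2 * H - 2) * x := by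
    rw [← Real.rpow_add_one hx.ne' (2 * H - 2)]
    congr 1; ring
  have hxapos : (0:ℝ) ≤ x ^ (2 * H - 1) := Real.rpow_nonneg hx.le _
  have h2 : (s / x) ^ (2 * H - 1) * x ^ (2 * H - 1)
      ≤ (1 + (2 * H - 1) * (s / x - 1)) * x ^ (2 * H - 1) :=
    mul_le_mul_of_nonneg_right hb hxapos
  have h3 : (1 + (2 * H - 1) * (s / x - 1)) * x ^ (2 * H - 1)
      = x ^ (2 * H - 1) - (2 * H - 1) * (x ^ (2 * H - 2) * (x - s)) := by
    rw [hxa]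
    field_simp
    ring
  rw [hsx]
  linarith [h2, h3.le, h3.ge]

/-- Integral identity for the comparison function. -/
lemma int_comparison {H : ℝ} (x : ℝ) :
    (∫ s in (0:ℝ)..x, Real.exp s *
        (x ^ (2 * H - 1) - (2 * H - 1) * (x ^ (2 * H - 2) * (x - s))))
      = Real.exp x * (x ^ (2 * H - 1) - (2 * H - 1) * x ^ (2 * H - 2))
        - (x ^ (2 * H - 1) - (2 * H - 1) * (x ^ (2 * H - 2) * (x + 1))) := by
  have hderiv : ∀ s ∈ Set.uIcc (0:ℝ) x,
      HasDerivAt (fun s : ℝ => Real.exp s *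
          (x ^ (2 * H - 1) - (2 * H - 1) * (x ^ (2 * H - 2) * (x + 1 - s))))
        (Real.exp s * (x ^ (2 * H - 1) - (2 * H - 1) * (x ^ (2 * H - 2) * (x - s)))) s := by
    intro s _
    have h2 : HasDerivAt (fun s : ℝ => x + 1 - s) (-1) s :=
      (hasDerivAt_id s).const_sub (x + 1)
    have h1 : HasDerivAt
        (fun s : ℝ => x ^ (2 * H - 1) - (2 * H - 1) * (x ^ (2 * H - 2) * (x + 1 - s)))
        ((2 * H - 1) * x ^ (2 * H - 2)) s := by
      have h3 := ((h2.const_mul (x ^ (2 * H - 2))).const_mul (2 * H - 1)).const_sub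
        (x ^ (2 * H - 1))
      exact h3.congr_deriv (by ring)
    have h4 := (Real.hasDerivAt_exp s).mul h1
    exact h4.congr_deriv (by ring)
  have hcont : IntervalIntegrable (fun s : ℝ => Real.exp s *
      (x ^ (2 * H - 1) - (2 * H - 1) * (x ^ (2 * H - 2) * (x - s)))) volume 0 x :=
    (Real.continuous_exp.mul (continuous_const.sub
      (continuous_const.mul (continuous_const.mul
        (continuous_const.sub continuous_id))))).intervalIntegrable _ _
  have heq := intervalIntegral.integral_eq_sub_of_hasDerivAt hderiv hcont
  rw [heq]
  simp only [Real.exp_zero]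
  ring

lemma two_mul_add_le_exp {x : ℝ} (hx : 2 ≤ x) : 2 * (x + 1) ≤ Real.exp x := by
  have h1 : (2.7182818283 : ℝ) < Real.exp 1 := Real.exp_one_gt_d9
  have h2 : Real.exp x = Real.exp 2 * Real.exp (x - 2) := by
    rw [← Real.exp_add]; ring_nf
  have h3 : x - 2 + 1 ≤ Real.exp (x - 2) := Real.add_one_le_exp _
  have h4 : Real.exp 2 = Real.exp 1 * Real.exp 1 := by
    rw [← Real.exp_add]; norm_num
  have h7 : (7:ℝ) ≤ Real.exp 2 := by rw [h4]; nlinarith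
  have h5 : Real.exp 2 * (x - 1) ≤ Real.exp x := by
    rw [h2]
    apply mul_le_mul_of_nonneg_left _ (Real.exp_pos 2).le
    linarith
  nlinarith [mul_le_mul_of_nonneg_right h7 (by linarith : (0:ℝ) ≤ x - 1)]

/-- Main lower bound: `f_H(x) ≥ (2H-1)/2 · x^{2H-2}` for `x ≥ 2`. -/
lemma fH_ge {H : ℝ} (hH : H ∈ Set.Ioo (1/2 : ℝ) 1) {x : ℝ} (hx : 2 ≤ x) :
    (2 * H - 1) / 2 * x ^ (2 * H - 2) ≤ fH H x := by
  have hx0 : (0:ℝ) < x := by linarith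
  have ha0 : (0:ℝ) < 2 * H - 1 := by linarith [hH.1]
  have h2H : (0:ℝ) < 2 * H := by linarith [hH.1]
  have hG : 0 < Real.Gamma (2 * H) := Real.Gamma_pos_of_pos h2H
  -- bound the integral in fH1
  have hIbound : (∫ s in (0:ℝ)..x, Real.exp s * s ^ (2 * H - 1))
      ≤ Real.exp x * (x ^ (2 * H - 1) - (2 * H - 1) * x ^ (2 * H - 2))
        - (x ^ (2 * H - 1) - (2 * H - 1) * (x ^ (2 * H - 2) * (x + 1))) := by
    rw [← int_comparison (H := H) x]
    apply intervalIntegral.integral_mono_on hx0.le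
    · exact (Real.continuous_exp.mul (cont_rpow hH)).intervalIntegrable _ _
    · exact (Real.continuous_exp.mul (continuous_const.sub (continuous_const.mul
        (continuous_const.mul (continuous_const.sub continuous_id))))).intervalIntegrable _ _
    · intro s hs
      exact mul_le_mul_of_nonneg_left (pointwise_bound hH hx0 hs.1) (Real.exp_pos _).le
  have h1 : Real.exp (-x) * (Real.Gamma (2 * H)
      - (Real.exp x * (x ^ (2 * H - 1) - (2 * H - 1) * x ^ (2 * H - 2))
        - (x ^ (2 * H - 1) - (2 * H - 1) * (x ^ (2 * H - 2) * (x + 1)))))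
      ≤ fH1 H x := by
    unfold fH1
    apply mul_le_mul_of_nonneg_left _ (Real.exp_pos _).le
    linarith
  have h2 := fH2_ge hH hx0
  have he : Real.exp (-x) * Real.exp x = 1 := by rw [← Real.exp_add]; simp
  have hepos : (0:ℝ) < Real.exp (-x) := Real.exp_pos _
  have hxa : (0:ℝ) ≤ x ^ (2 * H - 1) := Real.rpow_nonneg hx0.le _
  have hxb : (0:ℝ) ≤ x ^ (2 * H - 2) := Real.rpow_nonneg hx0.le _
  have hsmall : Real.exp (-x) * (x + 1) ≤ 1 / 2 := by
    have := two_mul_add_le_exp hx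
    rw [Real.exp_neg]
    rw [inv_mul_le_iff₀ (Real.exp_pos _)]
    linarith
  -- combine
  have hkey : (2 * H - 1) / 2 * x ^ (2 * H - 2)
      ≤ Real.exp (-x) * (Real.Gamma (2 * H)
        - (Real.exp x * (x ^ (2 * H - 1) - (2 * H - 1) * x ^ (2 * H - 2))
          - (x ^ (2 * H - 1) - (2 * H - 1) * (x ^ (2 * H - 2) * (x + 1)))))
        + x ^ (2 * H - 1) := by
    have hexp : Real.exp (-x) * (Real.Gamma (2 * H)
        - (Real.exp x * (x ^ (2 * H - 1) - (2 * H - 1) * x ^ (2 * H - 2))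
          - (x ^ (2 * H - 1) - (2 * H - 1) * (x ^ (2 * H - 2) * (x + 1)))))
        + x ^ (2 * H - 1)
        = Real.exp (-x) * Real.Gamma (2 * H) + (2 * H - 1) * x ^ (2 * H - 2)
          + Real.exp (-x) * x ^ (2 * H - 1)
          - (2 * H - 1) * x ^ (2 * H - 2) * (Real.exp (-x) * (x + 1)) := by
      linear_combination (-(x ^ (2 * H - 1)) + (2 * H - 1) * x ^ (2 * H - 2)) * he
    rw [hexp]
    have hterm : (2 * H - 1) * x ^ (2 * H - 2) * (Real.exp (-x) * (x + 1))
        ≤ (2 * H - 1) * x ^ (2 * H - 2) * (1 / 2) := by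
      apply mul_le_mul_of_nonneg_left hsmall
      positivity
    nlinarith [mul_nonneg hepos.le hG.le, mul_nonneg hepos.le hxa]
  unfold fH
  linarith

end FHaux

theorem stmt_6 (H l : ℝ) (hH : H ∈ Set.Ioo (1/2 : ℝ) 1) (hl : 0 < l) :
    Filter.Tendsto (fun N : ℕ => ∑ n ∈ Finset.Icc 1 N, fH H (l * n))
      Filter.atTop Filter.atTop := by
  have ha0 : (0:ℝ) < 2 * H - 1 := by linarith [hH.1]
  -- the comparison sequence
  set g : ℕ → ℝ := fun n => if 2 ≤ l * n then (2 * H - 1) / 2 * (l * n) ^ (2 * H - 2) else 0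
    with hg_def
  have hg0 : ∀ n, 0 ≤ g n := by
    intro n
    simp only [hg_def]
    split_ifs with h
    · positivity
    · exact le_rfl
  have hgle : ∀ n : ℕ, 1 ≤ n → g n ≤ fH H (l * n) := by
    intro n hn
    have hn1 : (1:ℝ) ≤ (n:ℝ) := by exact_mod_cast hn
    have hx0 : (0:ℝ) < l * n := by nlinarith
    simp only [hg_def]
    split_ifs with h
    · exact FHaux.fH_ge hH h
    · exact FHaux.fH_nonneg hH hx0
  -- non-summability of g
  have hns : ¬ Summable g := by
    intro hs
    set N₀ : ℕ := ⌈2 / l⌉₊ with hN₀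
    have hN₀ge : (2:ℝ) / l ≤ N₀ := Nat.le_ceil _
    have hbig : ∀ n : ℕ, (2:ℝ) ≤ l * (n + N₀) := by
      intro n
      have h1 : (2:ℝ) ≤ l * N₀ := by
        rw [div_le_iff₀ hl] at hN₀ge
        linarith
      have : l * N₀ ≤ l * (n + N₀) := by
        apply mul_le_mul_of_nonneg_left _ hl.le
        push_cast; linarith [Nat.cast_nonneg (α := ℝ) n]
      linarith
    set c : ℝ := (2 * H - 1) / 2 * l ^ (2 * H - 2) with hc_def
    have hc : c ≠ 0 := by
      have : (0:ℝ) < c := by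
        apply mul_pos (by linarith)
        exact Real.rpow_pos_of_pos hl _
      exact this.ne'
    have hshift : Summable (fun n : ℕ => g (n + N₀)) := (summable_nat_add_iff N₀).mpr hs
    have hcongr : ∀ n : ℕ, g (n + N₀) = c * ((n + N₀ : ℕ) : ℝ) ^ (2 * H - 2) := by
      intro n
      have hb := hbig n
      simp only [hg_def]
      rw [if_pos (by push_cast; push_cast at hb; linarith)]
      rw [hc_def]
      have hcast : ((n + N₀ : ℕ) : ℝ) = (n:ℝ) + (N₀:ℝ) := by push_cast; ring
      rw [hcast, Real.mul_rpow hl.le (by positivity)]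
      ring
    have hsum2 : Summable (fun n : ℕ => c * ((n + N₀ : ℕ) : ℝ) ^ (2 * H - 2)) := by
      exact hshift.congr hcongr
    have hsum3 : Summable (fun n : ℕ => c * (n : ℝ) ^ (2 * H - 2)) :=
      (summable_nat_add_iff N₀).mp hsum2
    have hsum4 : Summable (fun n : ℕ => (n : ℝ) ^ (2 * H - 2)) :=
      (summable_mul_left_iff hc).mp hsum3
    rw [Real.summable_nat_rpow] at hsum4
    linarith [hH.1]
  have htend : Tendsto (fun n : ℕ => ∑ i ∈ range n, g i) atTop atTop :=
    (not_summable_iff_tendsto_nat_atTop_of_nonneg hg0).mp hns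
  have hg00 : g 0 = 0 := by
    simp only [hg_def]
    rw [if_neg]
    push_cast
    rw [mul_zero]
    norm_num
  have hIcc : ∀ N : ℕ, ∑ n ∈ Icc 1 N, g n = ∑ n ∈ range (N + 1), g n := by
    intro N
    rw [Finset.range_eq_Ico, Finset.sum_eq_sum_Ico_succ_bot (Nat.succ_pos N), hg00,
      Nat.succ_eq_add_one, Finset.Ico_add_one_right_eq_Icc, zero_add]
  have htend2 : Tendsto (fun N : ℕ => ∑ n ∈ Icc 1 N, g n) atTop atTop := by
    have := htend.comp (tendsto_add_atTop_nat 1)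
    simp only [Function.comp_def] at this
    convert this using 2 with N
    exact hIcc N
  apply tendsto_atTop_mono _ htend2
  intro N
  apply Finset.sum_le_sum
  intro n hn
  exact hgle n (Finset.mem_Icc.mp hn).1
end

section
/- Let λ_1, λ_2, …, λ_p be pairwise distinct positive real numbers and set K_i := λ_i^{p−1} / ∏_{j≠i} (λ_i − λ_j). Then for every i = 1, …, p, K_i + 2λ_i ∑_{j≠i} K_j/(λ_i + λ_j) = λ_i^{p−1} / ∏_{j≠i} (λ_i + λ_j). -/
open Finset Polynomial

lemma lagrange_key (p : ℕ) (hp : 0 < p) (lam : Fin p → ℝ)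
    (hinj : Function.Injective lam) (x : ℝ) :
    ∑ j, lam j ^ (p - 1) * ∏ k ∈ univ.erase j, ((lam j - lam k)⁻¹ * (x - lam k)) =
      x ^ (p - 1) := by
  have hvs : Set.InjOn lam (univ : Finset (Fin p)) := hinj.injOn
  have hdeg : (X ^ (p - 1) : ℝ[X]).degree < (#(univ : Finset (Fin p)) : ℕ) := by
    rw [degree_X_pow, card_univ, Fintype.card_fin]
    exact_mod_cast Nat.sub_lt hp one_pos
  have h := Lagrange.eq_interpolate (f := (X ^ (p - 1) : ℝ[X])) hvs hdeg
  have h2 := congrArg (Polynomial.eval x) h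
  simp only [Lagrange.interpolate_apply, eval_pow, eval_X, eval_finset_sum, eval_mul, eval_C,
    Lagrange.basis, eval_prod, Lagrange.basisDivisor, eval_mul, eval_C, eval_sub, eval_X] at h2
  rw [h2]

theorem stmt_7 (p : ℕ) (lam : Fin p → ℝ) (hpos : ∀ i, 0 < lam i)
    (hinj : Function.Injective lam) (K : Fin p → ℝ)
    (hK : ∀ i, K i = lam i ^ (p - 1) / ∏ j ∈ Finset.univ.erase i, (lam i - lam j))
    (i : Fin p) :
    K i + 2 * lam i * ∑ j ∈ Finset.univ.erase i, K j / (lam i + lam j) =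
      lam i ^ (p - 1) / ∏ j ∈ Finset.univ.erase i, (lam i + lam j) := by
  have hp : 0 < p := i.pos
  have hne : ∀ j k : Fin p, lam j + lam k ≠ 0 :=
    fun j k => (add_pos (hpos j) (hpos k)).ne'
  have hsub : ∀ j : Fin p, (∏ k ∈ univ.erase j, (lam j - lam k)) ≠ 0 := by
    intro j
    refine prod_ne_zero_iff.mpr fun k hk => sub_ne_zero.mpr fun e => ?_
    exact (mem_erase.mp hk).1.symm (hinj e)
  set P : ℝ := ∏ k, (lam i + lam k) with hP
  have hPne : P ≠ 0 := prod_ne_zero_iff.mpr fun k _ => hne i k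
  have hcard : ∀ j : Fin p, #(univ.erase j) = p - 1 := fun j => by
    rw [card_erase_of_mem (mem_univ j), card_univ, Fintype.card_fin]
  -- Key identity with x = -lam i, signs cleaned up
  have hS0 : ∑ j, lam j ^ (p - 1) *
      ∏ k ∈ univ.erase j, ((lam j - lam k)⁻¹ * (lam i + lam k)) = lam i ^ (p - 1) := by
    have key := lagrange_key p hp lam hinj (-(lam i))
    have hprod : ∀ j : Fin p,
        ∏ k ∈ univ.erase j, ((lam j - lam k)⁻¹ * (-(lam i) - lam k)) =
        (-1 : ℝ) ^ (p - 1) *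
          ∏ k ∈ univ.erase j, ((lam j - lam k)⁻¹ * (lam i + lam k)) := by
      intro j
      rw [← hcard j, ← prod_const, ← prod_mul_distrib]
      exact prod_congr rfl fun k _ => by ring
    simp only [hprod] at key
    have hxp : (-(lam i)) ^ (p - 1) = (-1 : ℝ) ^ (p - 1) * lam i ^ (p - 1) := by
      rw [← neg_one_mul, mul_pow]
    rw [hxp] at key
    have hne1 : ((-1 : ℝ) ^ (p - 1)) ≠ 0 := by positivity
    apply mul_left_cancel₀ hne1
    rw [← key, mul_sum]
    exact sum_congr rfl fun j _ => by ring
  -- The full-sum identity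
  have hsum : ∑ j, K j / (lam i + lam j) = lam i ^ (p - 1) / P := by
    rw [eq_div_iff hPne, ← hS0, sum_mul]
    refine sum_congr rfl fun j _ => ?_
    have hPj : P = (lam i + lam j) * ∏ k ∈ univ.erase j, (lam i + lam k) :=
      (mul_prod_erase univ _ (mem_univ j)).symm
    rw [hK j, hPj, prod_mul_distrib, prod_inv_distrib]
    field_simp [hne i j, hsub j]
  -- split the sum at j = i
  have hsplit : ∑ j, K j / (lam i + lam j) =
      K i / (lam i + lam i) + ∑ j ∈ univ.erase i, K j / (lam i + lam j) :=
    (add_sum_erase univ _ (mem_univ i)).symm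
  have hPi : P = (lam i + lam i) * ∏ j ∈ univ.erase i, (lam i + lam j) :=
    (mul_prod_erase univ _ (mem_univ i)).symm
  have hEi : (∏ j ∈ univ.erase i, (lam i + lam j)) ≠ 0 :=
    prod_ne_zero_iff.mpr fun k _ => hne i k
  have hii := hne i i
  have hli := (hpos i).ne'
  have h2 : ∑ j ∈ univ.erase i, K j / (lam i + lam j) =
      lam i ^ (p - 1) / P - K i / (lam i + lam i) := by
    rw [← hsum, hsplit]; ring
  rw [h2, hPi]
  field_simp
  ring
end

section
/- Let H ∈ (1/2, 1), λ > 0 and t ≥ 0. Then (2H−1) ∫_0^{∞} ∫_0^{∞} e^{−λ(w + z)} |z − w − t|^{2H−2} dz dw = f_H(λ t)/(2 λ^{2H}). (This is the deterministic identity behind the auto-covariance E(X_0 X_t) = σ²H f_H(λ|t|)/(2λ^{2H}) of a fractional Ornstein–Uhlenbeck process FOU(λ,σ,H).) -/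
open MeasureTheory Real Filter Finset Topology

lemma aux_ii (c : ℝ) {β : ℝ} (hβ : -1 < β) (a b : ℝ) :
    IntervalIntegrable (fun r : ℝ => Real.exp (c * r) * r ^ β) volume a b :=
  (intervalIntegral.intervalIntegrable_rpow' hβ).continuousOn_mul
    (Real.continuous_exp.comp (continuous_const.mul continuous_id)).continuousOn

lemma aux_intOn {l β : ℝ} (hl : 0 < l) (hβ : 0 < β) :
    IntegrableOn (fun u : ℝ => Real.exp (-(l * u)) * u ^ (β - 1)) (Set.Ioi 0) := by
  have h := Real.GammaIntegral_convergent hβ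
  have h2 := (integrableOn_Ioi_comp_mul_left_iff
      (fun x => Real.exp (-x) * x ^ (β - 1)) 0 hl).mpr (by simpa using h)
  have h3 : IntegrableOn (fun x : ℝ => l ^ (β - 1) * (Real.exp (-(l * x)) * x ^ (β - 1)))
      (Set.Ioi 0) := by
    apply h2.congr_fun _ measurableSet_Ioi
    intro x hx
    dsimp only
    rw [Real.mul_rpow hl.le (le_of_lt hx)]
    ring
  have h4 : IntegrableOn
      (fun x : ℝ => (l ^ (β - 1))⁻¹ * (l ^ (β - 1) * (Real.exp (-(l * x)) * x ^ (β - 1))))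
      (Set.Ioi 0) := h3.const_mul _
  apply h4.congr_fun _ measurableSet_Ioi
  intro x hx
  dsimp only
  rw [← mul_assoc, inv_mul_cancel₀ (by positivity), one_mul]

lemma aux_intVal {l β : ℝ} (hl : 0 < l) (hβ : 0 < β) :
    ∫ u in Set.Ioi (0:ℝ), Real.exp (-(l * u)) * u ^ (β - 1) = Real.Gamma β / l ^ β := by
  have h := Real.integral_rpow_mul_exp_neg_mul_Ioi hβ hl
  simp_rw [mul_comm]
  rw [h, Real.div_rpow zero_le_one hl.le, Real.one_rpow]
  ring


lemma aux_trans (F : ℝ → ℝ) (t : ℝ) :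
    ∫ w in Set.Ioi (0:ℝ), F (w + t) = ∫ u in Set.Ioi t, F u := by
  have h := (measurePreserving_add_right volume t).setIntegral_preimage_emb
    (measurableEmbedding_addRight t) F (Set.Ioi t)
  simpa [Set.preimage_add_const_Ioi] using h

lemma aux_trans_int (F : ℝ → ℝ) (t : ℝ) :
    IntegrableOn (fun w => F (w + t)) (Set.Ioi 0) ↔ IntegrableOn F (Set.Ioi t) := by
  have h := ((measurePreserving_add_right volume t).restrict_preimage_emb
    (measurableEmbedding_addRight t) (Set.Ioi t)).integrable_comp_emb
    (measurableEmbedding_addRight t) (g := F)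
  rw [Set.preimage_add_const_Ioi, sub_self] at h
  exact h

lemma aux_scale (φ : ℝ → ℝ) {l α : ℝ} (hl : 0 < l) (hα : 0 < α) (hα1 : α < 1)
    {a : ℝ} (ha : 0 ≤ a) :
    ∫ r in (0:ℝ)..a, φ (l * r) * r ^ (α - 1)
      = l ^ (-α) * ∫ v in (0:ℝ)..(l * a), φ v * v ^ (α - 1) := by
  have h1 : ∀ r ∈ Set.uIcc (0:ℝ) a,
      φ (l * r) * r ^ (α - 1) = l ^ (1 - α) * (φ (l * r) * (l * r) ^ (α - 1)) := by
    intro r hr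
    rw [Set.uIcc_of_le ha] at hr
    rcases eq_or_lt_of_le hr.1 with h | h
    · rw [← h]
      rw [Real.zero_rpow (by linarith), mul_zero, Real.mul_rpow hl.le le_rfl,
        Real.zero_rpow (by linarith)]
      ring
    · have hll : l ^ ((1:ℝ) - α) * l ^ (α - 1) = 1 := by
        rw [← Real.rpow_add hl]; norm_num
      rw [Real.mul_rpow hl.le h.le]
      calc φ (l * r) * r ^ (α - 1)
          = (l ^ ((1:ℝ) - α) * l ^ (α - 1)) * (φ (l * r) * r ^ (α - 1)) := by rw [hll]; ring
        _ = l ^ (1 - α) * (φ (l * r) * (l ^ (α - 1) * r ^ (α - 1))) := by ring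
  rw [intervalIntegral.integral_congr h1, intervalIntegral.integral_const_mul,
    intervalIntegral.integral_comp_mul_left (fun v => φ v * v ^ (α - 1)) hl.ne']
  simp only [mul_zero, smul_eq_mul]
  rw [← mul_assoc, ← Real.rpow_neg_one l, ← Real.rpow_add hl]
  ring_nf

lemma aux_tail {l α : ℝ} (hl : 0 < l) (hα : 0 < α) (hα1 : α < 1) {c : ℝ} (hc : 0 ≤ c) :
    ∫ u in Set.Ioi c, Real.exp (-(l * u)) * u ^ (α - 1)
      = l ^ (-α) * (Real.Gamma α - ∫ v in (0:ℝ)..(l * c), Real.exp (-v) * v ^ (α - 1)) := by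
  have hint := aux_intOn hl hα
  have hsplit : ∫ u in Set.Ioi (0:ℝ), Real.exp (-(l * u)) * u ^ (α - 1)
      = (∫ u in Set.Ioc 0 c, Real.exp (-(l * u)) * u ^ (α - 1))
        + ∫ u in Set.Ioi c, Real.exp (-(l * u)) * u ^ (α - 1) := by
    rw [← Set.Ioc_union_Ioi_eq_Ioi hc]
    exact setIntegral_union Set.Ioc_disjoint_Ioi_same measurableSet_Ioi
      (hint.mono_set (by rw [← Set.Ioc_union_Ioi_eq_Ioi hc]; exact Set.subset_union_left))
      (hint.mono_set (by rw [← Set.Ioc_union_Ioi_eq_Ioi hc]; exact Set.subset_union_right))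
  have hIoc : ∫ u in Set.Ioc (0:ℝ) c, Real.exp (-(l * u)) * u ^ (α - 1)
      = l ^ (-α) * ∫ v in (0:ℝ)..(l * c), Real.exp (-v) * v ^ (α - 1) := by
    rw [← intervalIntegral.integral_of_le hc]
    exact aux_scale (fun v => Real.exp (-v)) hl hα hα1 hc
  have hval := aux_intVal hl hα
  rw [hval, hIoc] at hsplit
  have hlα : l ^ (-α) = (l ^ α)⁻¹ := Real.rpow_neg hl.le α
  rw [hlα] at hsplit ⊢
  have : (0:ℝ) < l ^ α := Real.rpow_pos_of_pos hl α
  field_simp at hsplit ⊢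
  linarith



lemma aux_inner {l α : ℝ} (hl : 0 < l) (hα : 0 < α) (hα1 : α < 1) {a : ℝ} (ha : 0 < a) :
    ∫ z in Set.Ioi (0:ℝ), Real.exp (-(l * z)) * |z - a| ^ (α - 1)
      = Real.exp (-(l * a)) * ((∫ r in (0:ℝ)..a, Real.exp (l * r) * r ^ (α - 1))
          + Real.Gamma α / l ^ α) := by
  have hf_ii : IntervalIntegrable (fun r => Real.exp (-(l * (a - r))) * r ^ (α - 1))
      volume 0 a := by
    apply IntervalIntegrable.continuousOn_mul
      (intervalIntegral.intervalIntegrable_rpow' (by linarith))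
    apply Continuous.continuousOn
    fun_prop
  set f : ℝ → ℝ := fun r => Real.exp (-(l * (a - r))) * r ^ (α - 1) with hf_def
  have hj_ii : IntervalIntegrable (fun z => f (a - z)) volume 0 a := by
    simpa using (hf_ii.comp_sub_left a).symm
  have habs : ∀ z ∈ Set.Ioc (0:ℝ) a,
      Real.exp (-(l * z)) * |z - a| ^ (α - 1) = f (a - z) := by
    intro z hz
    simp only [hf_def, sub_sub_cancel]
    rw [abs_of_nonpos (by linarith [hz.2]), neg_sub]
  have I_Ioc : IntegrableOn (fun z => Real.exp (-(l * z)) * |z - a| ^ (α - 1))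
      (Set.Ioc 0 a) := by
    have h1 : IntegrableOn (fun z => f (a - z)) (Set.Ioc 0 a) :=
      (intervalIntegrable_iff_integrableOn_Ioc_of_le ha.le).mp hj_ii
    exact h1.congr_fun (fun z hz => (habs z hz).symm) measurableSet_Ioc
  set k : ℝ → ℝ := fun z => Real.exp (-(l * z)) * (z - a) ^ (α - 1) with hk_def
  have hk_shift : ∀ w : ℝ, k (w + a)
      = Real.exp (-(l * a)) * (Real.exp (-(l * w)) * w ^ (α - 1)) := by
    intro w
    simp only [hk_def, add_sub_cancel_right]
    rw [← mul_assoc, ← Real.exp_add]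
    ring_nf
  have I_k : IntegrableOn k (Set.Ioi a) := by
    rw [← aux_trans_int k a]
    have h5 : IntegrableOn
        (fun w : ℝ => Real.exp (-(l * a)) * (Real.exp (-(l * w)) * w ^ (α - 1)))
        (Set.Ioi 0) := (aux_intOn hl hα).const_mul (Real.exp (-(l * a)))
    exact h5.congr_fun (fun w _ => (hk_shift w).symm) measurableSet_Ioi
  have habs2 : ∀ z ∈ Set.Ioi a,
      Real.exp (-(l * z)) * |z - a| ^ (α - 1) = k z := by
    intro z hz
    simp only [hk_def]
    rw [abs_of_nonneg (by linarith [Set.mem_Ioi.mp hz])]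
  have I_Ioi : IntegrableOn (fun z => Real.exp (-(l * z)) * |z - a| ^ (α - 1))
      (Set.Ioi a) :=
    I_k.congr_fun (fun z hz => (habs2 z hz).symm) measurableSet_Ioi
  have hsplit : ∫ z in Set.Ioi (0:ℝ), Real.exp (-(l * z)) * |z - a| ^ (α - 1)
      = (∫ z in Set.Ioc (0:ℝ) a, Real.exp (-(l * z)) * |z - a| ^ (α - 1))
        + ∫ z in Set.Ioi a, Real.exp (-(l * z)) * |z - a| ^ (α - 1) := by
    rw [← Set.Ioc_union_Ioi_eq_Ioi ha.le]
    exact setIntegral_union Set.Ioc_disjoint_Ioi_same measurableSet_Ioi I_Ioc I_Ioi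
  have hIoc : ∫ z in Set.Ioc (0:ℝ) a, Real.exp (-(l * z)) * |z - a| ^ (α - 1)
      = Real.exp (-(l * a)) * ∫ r in (0:ℝ)..a, Real.exp (l * r) * r ^ (α - 1) := by
    rw [← intervalIntegral.integral_of_le ha.le]
    rw [intervalIntegral.integral_congr (g := fun z => f (a - z)) ?_]
    · rw [intervalIntegral.integral_comp_sub_left f a]
      simp only [sub_self, sub_zero]
      have : ∀ r ∈ Set.uIcc (0:ℝ) a,
          f r = Real.exp (-(l * a)) * (Real.exp (l * r) * r ^ (α - 1)) := by
        intro r _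
        simp only [hf_def]
        rw [← mul_assoc, ← Real.exp_add]
        ring_nf
      rw [intervalIntegral.integral_congr this, intervalIntegral.integral_const_mul]
    · intro z hz
      rw [Set.uIcc_of_le ha.le] at hz
      rcases eq_or_lt_of_le hz.1 with h | h
      · rw [← h]
        simp only [hf_def, zero_sub, abs_neg, sub_zero, sub_sub_cancel, mul_zero, neg_zero,
          sub_self]
        rw [abs_of_nonneg ha.le]
      · exact habs z ⟨h, hz.2⟩
  have hIoi : ∫ z in Set.Ioi a, Real.exp (-(l * z)) * |z - a| ^ (α - 1)
      = Real.exp (-(l * a)) * (Real.Gamma α / l ^ α) := by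
    rw [setIntegral_congr_fun measurableSet_Ioi habs2, ← aux_trans k a]
    rw [setIntegral_congr_fun measurableSet_Ioi (fun w _ => hk_shift w)]
    rw [integral_const_mul, aux_intVal hl hα]
  rw [hsplit, hIoc, hIoi]
  ring




/-- `c * ∫₀ˣ e^{cv} v^α dv + α * ∫₀ˣ e^{cv} v^{α-1} dv = e^{cx} x^α` for `0 ≤ x`. -/
lemma aux_parts {α : ℝ} (hα : 0 < α) (hα1 : α < 1) {x : ℝ} (hx : 0 ≤ x) (c : ℝ) :
    c * (∫ v in (0:ℝ)..x, Real.exp (c * v) * v ^ α)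
      + α * (∫ v in (0:ℝ)..x, Real.exp (c * v) * v ^ (α - 1))
      = Real.exp (c * x) * x ^ α := by
  have hcont : ContinuousOn (fun v : ℝ => Real.exp (c * v) * v ^ α) (Set.Icc 0 x) := by
    intro v hv
    apply ContinuousWithinAt.mul
    · exact (Real.continuous_exp.comp (continuous_const.mul continuous_id)).continuousWithinAt
    · rcases eq_or_ne v 0 with rfl | hv0
      · exact (Real.continuousAt_rpow_const 0 α (Or.inr hα.le)).continuousWithinAt
      · exact (Real.continuousAt_rpow_const v α (Or.inl hv0)).continuousWithinAt
  have hderiv : ∀ v ∈ Set.Ioo 0 x,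
      HasDerivWithinAt (fun v : ℝ => Real.exp (c * v) * v ^ α)
        (c * (Real.exp (c * v) * v ^ α) + α * (Real.exp (c * v) * v ^ (α - 1)))
        (Set.Ioi v) v := by
    intro v hv
    have h1 : HasDerivAt (fun v : ℝ => Real.exp (c * v)) (Real.exp (c * v) * c) v := by
      simpa using ((hasDerivAt_id v).const_mul c).exp
    have h2 : HasDerivAt (fun v : ℝ => v ^ α) (α * v ^ (α - 1)) v :=
      Real.hasDerivAt_rpow_const (Or.inl (ne_of_gt hv.1))
    have := h1.mul h2
    apply HasDerivAt.hasDerivWithinAt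
    exact this.congr_deriv (by ring)
  have hint : IntervalIntegrable
      (fun v : ℝ => c * (Real.exp (c * v) * v ^ α) + α * (Real.exp (c * v) * v ^ (α - 1)))
      volume 0 x :=
    ((aux_ii c (by linarith) 0 x).const_mul c).add ((aux_ii c (by linarith) 0 x).const_mul α)
  have hFTC := intervalIntegral.integral_eq_sub_of_hasDeriv_right_of_le hx hcont hderiv hint
  rw [intervalIntegral.integral_add ((aux_ii c (by linarith) 0 x).const_mul c)
    ((aux_ii c (by linarith) 0 x).const_mul α),
    intervalIntegral.integral_const_mul, intervalIntegral.integral_const_mul] at hFTC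
  rw [hFTC, Real.zero_rpow hα.ne']
  ring

lemma aux_fH {H x : ℝ} (hH1 : 1/2 < H) (hH2 : H < 1) (hx : 0 ≤ x) :
    fH H x = (2*H-1) * (Real.exp (-x) * (Real.Gamma (2*H-1)
        + ∫ v in (0:ℝ)..x, Real.exp v * v ^ (2*H-1-1))
      + Real.exp x * (Real.Gamma (2*H-1)
        - ∫ v in (0:ℝ)..x, Real.exp (-v) * v ^ (2*H-1-1))) := by
  have hα : 0 < 2*H-1 := by linarith
  have hα1 : 2*H-1 < 1 := by linarith
  have hG : Real.Gamma (2*H) = (2*H-1) * Real.Gamma (2*H-1) := by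
    have h := Real.Gamma_add_one (s := 2*H-1) (by positivity)
    rw [show (2*H-1) + 1 = 2*H by ring] at h
    exact h
  have hp1 := aux_parts hα hα1 hx 1
  have hp2 := aux_parts hα hα1 hx (-1)
  simp only [one_mul, neg_one_mul] at hp1 hp2
  rw [fH, fH1, fH2, hG]
  linear_combination (-(Real.exp (-x))) * hp1 + Real.exp x * hp2



lemma aux_rpow_le_one_add {a α : ℝ} (ha : 0 ≤ a) (hα : 0 ≤ α) (hα1 : α ≤ 1) : a ^ α ≤ 1 + a := by
  rcases le_total a 1 with h | h
  · have := Real.rpow_le_one ha h hα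
    linarith
  · have := Real.rpow_le_rpow_of_exponent_le h hα1
    rw [Real.rpow_one] at this
    linarith

lemma aux_outer {l α t C : ℝ} (hl : 0 < l) (hα : 0 < α) (hα1 : α < 1) (ht : 0 ≤ t) (hC : 0 ≤ C) :
    ∫ w in Set.Ioi (0:ℝ),
        Real.exp (-(2*l)*w) * ((∫ r in (0:ℝ)..(w+t), Real.exp (l*r) * r ^ (α-1)) + C)
      = ((∫ r in (0:ℝ)..t, Real.exp (l*r) * r ^ (α-1)) + C) / (2*l)
        + (Real.exp (2*l*t) / (2*l)) * ∫ u in Set.Ioi t, Real.exp (-(l*u)) * u ^ (α-1) := by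
  have h2l : (0:ℝ) < 2*l := by linarith
  have hRcont : Continuous (fun a : ℝ => ∫ r in (0:ℝ)..a, Real.exp (l*r) * r ^ (α-1)) :=
    intervalIntegral.continuous_primitive (fun a b => aux_ii l (by linarith) a b) 0
  have hfcont : ContinuousOn (fun r : ℝ => Real.exp (l*r) * r ^ (α-1)) (Set.Ioi 0) := by
    intro r hr
    exact ((Real.continuous_exp.comp (continuous_const.mul continuous_id)).continuousAt.mul
      (Real.continuousAt_rpow_const r (α-1) (Or.inl (ne_of_gt hr)))).continuousWithinAt
  have hRd : ∀ a : ℝ, 0 < a →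
      HasDerivAt (fun a : ℝ => ∫ r in (0:ℝ)..a, Real.exp (l*r) * r ^ (α-1))
        (Real.exp (l*a) * a ^ (α-1)) a := by
    intro a ha
    exact intervalIntegral.integral_hasDerivAt_right (aux_ii l (by linarith) 0 a)
      (ContinuousOn.stronglyMeasurableAtFilter isOpen_Ioi hfcont a ha)
      (((Real.continuous_exp.comp (continuous_const.mul continuous_id)).continuousAt).mul
        (Real.continuousAt_rpow_const a (α-1) (Or.inl (ne_of_gt ha))))
  have hR0 : ∀ a : ℝ, 0 ≤ a → 0 ≤ ∫ r in (0:ℝ)..a, Real.exp (l*r) * r ^ (α-1) := by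
    intro a ha
    apply intervalIntegral.integral_nonneg ha
    intro r hr
    exact mul_nonneg (Real.exp_nonneg _) (Real.rpow_nonneg hr.1 _)
  have hRbound : ∀ a : ℝ, 0 ≤ a →
      (∫ r in (0:ℝ)..a, Real.exp (l*r) * r ^ (α-1)) ≤ Real.exp (l*a) * ((1+a) / α) := by
    intro a ha
    have h1 : (∫ r in (0:ℝ)..a, Real.exp (l*r) * r ^ (α-1))
        ≤ ∫ r in (0:ℝ)..a, Real.exp (l*a) * r ^ (α-1) := by
      apply intervalIntegral.integral_mono_on ha (aux_ii l (by linarith) 0 a)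
        ((intervalIntegral.intervalIntegrable_rpow' (by linarith)).const_mul _)
      intro r hr
      have hle : Real.exp (l*r) ≤ Real.exp (l*a) :=
        Real.exp_le_exp.mpr (by nlinarith [hr.1, hr.2])
      exact mul_le_mul_of_nonneg_right hle (Real.rpow_nonneg hr.1 _)
    have h2 : ∫ r in (0:ℝ)..a, Real.exp (l*a) * r ^ (α-1)
        = Real.exp (l*a) * (a ^ α / α) := by
      rw [intervalIntegral.integral_const_mul, integral_rpow (Or.inl (by linarith))]
      rw [show α - 1 + 1 = α by ring, Real.zero_rpow hα.ne']
      ring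
    have h3 : Real.exp (l*a) * (a ^ α / α) ≤ Real.exp (l*a) * ((1+a) / α) := by
      gcongr
      exact aux_rpow_le_one_add ha hα.le hα1.le
    linarith
  set g : ℝ → ℝ := fun w =>
    Real.exp (-(2*l)*w) * ((∫ r in (0:ℝ)..(w+t), Real.exp (l*r) * r ^ (α-1)) + C) with hg_def
  set ψ : ℝ → ℝ := fun w =>
    Real.exp (-(2*l)*w) * (Real.exp (l*(w+t)) * (w+t) ^ (α-1)) / (2*l) with hψ_def
  set Φ : ℝ → ℝ := fun w => -(g w) / (2*l) with hΦ_def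
  set M : ℝ → ℝ := fun w => C * Real.exp (-(2*l)*w)
    + (Real.exp (l*t) / α) * ((1+t) * Real.exp (-l*w) + w * Real.exp (-l*w)) with hM_def
  have hbound : ∀ w : ℝ, 0 ≤ w → 0 ≤ g w ∧ g w ≤ M w := by
    intro w hw0
    have hwt : 0 ≤ w + t := by linarith
    have hgnn : 0 ≤ g w := by
      simp only [hg_def]
      exact mul_nonneg (Real.exp_nonneg _) (add_nonneg (hR0 _ hwt) hC)
    refine ⟨hgnn, ?_⟩
    have h1 : (∫ r in (0:ℝ)..(w+t), Real.exp (l*r) * r ^ (α-1)) + C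
        ≤ Real.exp (l*(w+t)) * ((1+(w+t))/α) + C := by
      have := hRbound (w+t) hwt; linarith
    have h2 : g w ≤ Real.exp (-(2*l)*w) * (Real.exp (l*(w+t)) * ((1+(w+t))/α) + C) := by
      simp only [hg_def]
      exact mul_le_mul_of_nonneg_left h1 (Real.exp_nonneg _)
    refine h2.trans (le_of_eq ?_)
    have e1 : Real.exp (-(2*l)*w) * Real.exp (l*(w+t)) = Real.exp (l*t) * Real.exp (-l*w) := by
      rw [← Real.exp_add, ← Real.exp_add]; ring_nf
    calc Real.exp (-(2*l)*w) * (Real.exp (l*(w+t)) * ((1+(w+t))/α) + C)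
        = (Real.exp (-(2*l)*w) * Real.exp (l*(w+t))) * ((1+(w+t))/α)
            + C * Real.exp (-(2*l)*w) := by ring
      _ = (Real.exp (l*t) * Real.exp (-l*w)) * ((1+(w+t))/α)
            + C * Real.exp (-(2*l)*w) := by rw [e1]
      _ = M w := by simp only [hM_def]; ring
  have hgcont : Continuous g := by
    simp only [hg_def]
    exact (Real.continuous_exp.comp (continuous_const.mul continuous_id)).mul
      ((hRcont.comp (continuous_id.add continuous_const)).add continuous_const)
  have hM1 : IntegrableOn (fun w : ℝ => C * Real.exp (-(2*l)*w)) (Set.Ioi 0) :=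
    (exp_neg_integrableOn_Ioi 0 h2l).const_mul C
  have hM2 : IntegrableOn (fun w : ℝ => (1+t) * Real.exp (-l*w)) (Set.Ioi 0) :=
    (exp_neg_integrableOn_Ioi 0 hl).const_mul (1+t)
  have hM3 : IntegrableOn (fun w : ℝ => w * Real.exp (-l*w)) (Set.Ioi 0) := by
    have h4 : IntegrableOn (fun u : ℝ => Real.exp (-(l*u)) * u ^ ((2:ℝ)-1)) (Set.Ioi 0) :=
      aux_intOn hl two_pos
    apply h4.congr_fun _ measurableSet_Ioi
    intro u hu
    dsimp only
    rw [show ((2:ℝ)-1) = 1 by norm_num, Real.rpow_one, neg_mul]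
    ring
  have hM23 : IntegrableOn (fun w : ℝ =>
      (Real.exp (l*t) / α) * ((1+t) * Real.exp (-l*w) + w * Real.exp (-l*w)))
      (Set.Ioi 0) := (hM2.add hM3).const_mul _
  have hMint : IntegrableOn M (Set.Ioi 0) := hM1.add hM23
  have hgint : IntegrableOn g (Set.Ioi 0) := by
    apply hMint.mono' (hgcont.aestronglyMeasurable.restrict)
    rw [ae_restrict_iff' measurableSet_Ioi]
    apply ae_of_all
    intro w hw
    obtain ⟨h0, h1⟩ := hbound w (le_of_lt hw)
    rw [Real.norm_eq_abs, abs_of_nonneg h0]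
    exact h1
  have hFint : IntegrableOn (fun u : ℝ => Real.exp (-(l*u)) * u ^ (α-1)) (Set.Ioi t) :=
    (aux_intOn hl hα).mono_set (Set.Ioi_subset_Ioi ht)
  have hψ_eq : ∀ w : ℝ, ψ w
      = (Real.exp (2*l*t) / (2*l)) * (Real.exp (-(l*(w+t))) * (w+t) ^ (α-1)) := by
    intro w
    simp only [hψ_def]
    have e2 : Real.exp (-(2*l)*w) * Real.exp (l*(w+t))
        = Real.exp (2*l*t) * Real.exp (-(l*(w+t))) := by
      rw [← Real.exp_add, ← Real.exp_add]; ring_nf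
    calc Real.exp (-(2*l)*w) * (Real.exp (l*(w+t)) * (w+t) ^ (α-1)) / (2*l)
        = (Real.exp (-(2*l)*w) * Real.exp (l*(w+t))) * (w+t) ^ (α-1) / (2*l) := by ring
      _ = (Real.exp (2*l*t) * Real.exp (-(l*(w+t)))) * (w+t) ^ (α-1) / (2*l) := by rw [e2]
      _ = (Real.exp (2*l*t) / (2*l)) * (Real.exp (-(l*(w+t))) * (w+t) ^ (α-1)) := by ring
  have hψint : IntegrableOn ψ (Set.Ioi 0) := by
    have h1 : IntegrableOn (fun w : ℝ => Real.exp (-(l*(w+t))) * (w+t) ^ (α-1)) (Set.Ioi 0) :=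
      (aux_trans_int (fun u => Real.exp (-(l*u)) * u ^ (α-1)) t).mpr hFint
    have h2 : IntegrableOn (fun w : ℝ =>
        (Real.exp (2*l*t) / (2*l)) * (Real.exp (-(l*(w+t))) * (w+t) ^ (α-1)))
        (Set.Ioi 0) := h1.const_mul _
    exact h2.congr_fun (fun w _ => (hψ_eq w).symm) measurableSet_Ioi
  have hψval : ∫ w in Set.Ioi (0:ℝ), ψ w
      = (Real.exp (2*l*t) / (2*l)) * ∫ u in Set.Ioi t, Real.exp (-(l*u)) * u ^ (α-1) := by
    rw [setIntegral_congr_fun measurableSet_Ioi (fun w _ => hψ_eq w), integral_const_mul,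
      aux_trans (fun u => Real.exp (-(l*u)) * u ^ (α-1)) t]
  have hMtend : Tendsto M atTop (𝓝 0) := by
    have hneg1 : Tendsto (fun w : ℝ => -(2*l) * w) atTop atBot :=
      Tendsto.const_mul_atTop_of_neg (by linarith) tendsto_id
    have t1 : Tendsto (fun w : ℝ => Real.exp (-(2*l)*w)) atTop (𝓝 0) := by
      simpa [Function.comp_def] using Real.tendsto_exp_atBot.comp hneg1
    have hneg2 : Tendsto (fun w : ℝ => -l * w) atTop atBot :=
      Tendsto.const_mul_atTop_of_neg (by linarith) tendsto_id
    have t2 : Tendsto (fun w : ℝ => Real.exp (-l*w)) atTop (𝓝 0) := by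
      simpa [Function.comp_def] using Real.tendsto_exp_atBot.comp hneg2
    have t3 : Tendsto (fun w : ℝ => w * Real.exp (-l*w)) atTop (𝓝 0) := by
      have := tendsto_rpow_mul_exp_neg_mul_atTop_nhds_zero 1 l hl
      simpa [Real.rpow_one] using this
    have := ((t1.const_mul C)).add (((t2.const_mul (1+t)).add t3).const_mul
      (Real.exp (l*t) / α))
    rw [hM_def]
    simpa using this
  have hgtend : Tendsto g atTop (𝓝 0) := by
    apply squeeze_zero'
      (Filter.eventually_atTop.mpr ⟨0, fun w hw => (hbound w hw).1⟩)
      (Filter.eventually_atTop.mpr ⟨0, fun w hw => (hbound w hw).2⟩) hMtend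
  have hΦtend : Tendsto Φ atTop (𝓝 0) := by
    have := (hgtend.neg).div_const (2*l)
    simpa [hΦ_def] using this
  have hΦcont : ContinuousWithinAt Φ (Set.Ici 0) 0 := by
    apply Continuous.continuousWithinAt
    simp only [hΦ_def]
    exact (hgcont.neg).div_const (2*l)
  have hΦd : ∀ w ∈ Set.Ioi (0:ℝ), HasDerivAt Φ (g w - ψ w) w := by
    intro w hw
    have hwt : 0 < w + t := by have := Set.mem_Ioi.mp hw; linarith
    have hE : HasDerivAt (fun w : ℝ => Real.exp (-(2*l)*w))
        (Real.exp (-(2*l)*w) * (-(2*l))) w := by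
      simpa using ((hasDerivAt_id w).const_mul (-(2*l))).exp
    have hcomp : HasDerivAt (fun w : ℝ => ∫ r in (0:ℝ)..(w+t), Real.exp (l*r) * r ^ (α-1))
        (Real.exp (l*(w+t)) * (w+t) ^ (α-1)) w := by
      have h := (hRd (w+t) hwt).comp w ((hasDerivAt_id w).add_const t)
      simpa [Function.comp_def] using h
    have hprod := hE.mul (hcomp.add_const C)
    have hfinal := (hprod.neg).div_const (2*l)
    simp only [hΦ_def, hg_def, hψ_def]
    refine hfinal.congr_deriv ?_
    field_simp
    ring
  have hFTC := integral_Ioi_of_hasDerivAt_of_tendsto hΦcont hΦd (hgint.sub hψint) hΦtend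
  have hΦ0 : Φ 0 = -(((∫ r in (0:ℝ)..t, Real.exp (l*r) * r ^ (α-1)) + C) / (2*l)) := by
    simp only [hΦ_def, hg_def, mul_zero, neg_mul, neg_zero, Real.exp_zero, one_mul, zero_add]
    ring
  have hsub : IntegrableOn (fun w : ℝ => g w - ψ w) (Set.Ioi 0) := hgint.sub hψint
  have hgval : ∫ w in Set.Ioi (0:ℝ), g w
      = (0 - Φ 0) + ∫ w in Set.Ioi (0:ℝ), ψ w := by
    rw [← hFTC]
    have h := integral_add hsub hψint
    rw [← h]
    apply setIntegral_congr_fun measurableSet_Ioi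
    intro w _
    ring
  show (∫ w in Set.Ioi (0:ℝ), g w) = _
  rw [hgval, hΦ0, hψval]
  ring

theorem stmt_13 (H l t : ℝ) (hH : H ∈ Set.Ioo (1/2 : ℝ) 1) (hl : 0 < l) (ht : 0 ≤ t) :
    (2 * H - 1) *
        ∫ w in Set.Ioi (0:ℝ), ∫ z in Set.Ioi (0:ℝ),
          Real.exp (-l * (w + z)) * |z - w - t| ^ (2 * H - 2) =
      fH H (l * t) / (2 * l ^ (2 * H)) := by
  obtain ⟨hH1, hH2⟩ := hH
  have hα : 0 < 2*H-1 := by linarith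
  have hα1 : 2*H-1 < 1 := by linarith
  have hC : 0 ≤ Real.Gamma (2*H-1) / l ^ (2*H-1) := by positivity
  have hinner : ∀ w ∈ Set.Ioi (0:ℝ),
      (∫ z in Set.Ioi (0:ℝ), Real.exp (-l * (w + z)) * |z - w - t| ^ (2*H - 2))
        = Real.exp (-(l*t)) * (Real.exp (-(2*l)*w)
            * ((∫ r in (0:ℝ)..(w+t), Real.exp (l*r) * r ^ (2*H-1-1))
              + Real.Gamma (2*H-1) / l ^ (2*H-1))) := by
    intro w hw
    have hw0 : 0 < w := hw
    have hwt : 0 < w + t := by linarith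
    have h1 : ∀ z ∈ Set.Ioi (0:ℝ), Real.exp (-l * (w + z)) * |z - w - t| ^ (2*H - 2)
        = Real.exp (-(l*w)) * (Real.exp (-(l*z)) * |z - (w+t)| ^ (2*H-1-1)) := by
      intro z _
      rw [show z - w - t = z - (w+t) by ring, show (2*H-2 : ℝ) = 2*H-1-1 by ring,
        ← mul_assoc, ← Real.exp_add]
      congr 2
      ring
    rw [setIntegral_congr_fun measurableSet_Ioi (fun z hz => h1 z hz), integral_const_mul,
      aux_inner hl hα hα1 hwt]
    rw [← mul_assoc, ← mul_assoc, ← Real.exp_add, ← Real.exp_add]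
    congr 2
    ring
  rw [setIntegral_congr_fun measurableSet_Ioi (fun w hw => hinner w hw), integral_const_mul,
    aux_outer hl hα hα1 ht hC, aux_tail hl hα hα1 ht,
    aux_scale Real.exp hl hα hα1 ht,
    aux_fH hH1 hH2 (by positivity : (0:ℝ) ≤ l*t)]
  have hE : Real.exp (-(l*t)) * Real.exp (2*l*t) = Real.exp (l*t) := by
    rw [← Real.exp_add]; ring_nf
  have hl1 : l ^ (-(2*H-1)) = (l ^ (2*H-1))⁻¹ := Real.rpow_neg hl.le _
  have hl2 : l ^ ((2:ℝ)*H) = l ^ (2*H-1) * l := by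
    have h := Real.rpow_add hl (2*H-1) 1
    rw [Real.rpow_one] at h
    rw [show (2*H-1) + 1 = 2*H by ring] at h
    exact h
  rw [hl1, hl2, ← hE]
  have hL : (0:ℝ) < l ^ ((2:ℝ)*H - 1) := Real.rpow_pos_of_pos hl _
  field_simp
  ring
end

section
/- Let H ∈ (1/2, 1), let λ_1, …, λ_p be pairwise distinct positive real numbers, set K_i := λ_i^{p−1} / ∏_{j≠i}(λ_i − λ_j), and let t ≥ 0. Then ∑_{i=1}^{p} ∑_{j=1}^{p} K_i K_j (λ_i^{1−2H} f_H^{(1)}(λ_i t) + λ_j^{1−2H} f_H^{(2)}(λ_j t)) / (λ_i + λ_j) = (1/2) ∑_{i=1}^{p} [λ_i^{2p−2H−2} / ∏_{j≠i}(λ_i² − λ_j²)] f_H(λ_i t). (This is the algebraic identity showing that the auto-covariance of the FOU(λ_1,…,λ_p,σ,H) process equals (σ²H/2) ∑_i [λ_i^{2p−2H−2}/∏_{j≠i}(λ_i²−λ_j²)] f_H(λ_i t).) -/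
open MeasureTheory Real Filter Finset

open Polynomial in
lemma keyPoly {p : ℕ} (hp : 0 < p) (lam : Fin p → ℝ) (hinj : Function.Injective lam)
    (x : ℝ) :
    ∑ i, (lam i ^ (p - 1) / ∏ j ∈ Finset.univ.erase i, (lam i - lam j)) *
      ∏ j ∈ Finset.univ.erase i, (x + lam j) = x ^ (p - 1) := by
  have hv : Set.InjOn (fun i => -lam i) (Finset.univ : Finset (Fin p)) := by
    intro a _ b _ h
    exact hinj (neg_injective h)
  have hdeg : (X ^ (p - 1) : ℝ[X]).degree < ((Finset.univ : Finset (Fin p)).card : ℕ) := by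
    rw [degree_X_pow, Finset.card_univ, Fintype.card_fin]
    exact_mod_cast Nat.sub_lt hp one_pos
  have h := Lagrange.eq_interpolate (v := fun i => -lam i) (f := (X ^ (p - 1) : ℝ[X])) hv hdeg
  have hx := congrArg (Polynomial.eval x) h
  simp only [Lagrange.interpolate_apply, Lagrange.basis, Lagrange.basisDivisor,
    eval_finset_sum, eval_mul, eval_C, eval_pow, eval_X, eval_prod, eval_sub] at hx
  rw [eq_comm]
  rw [hx]
  refine Finset.sum_congr rfl fun i _ => ?_
  have hcard : (Finset.univ.erase i).card = p - 1 := by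
    rw [Finset.card_erase_of_mem (Finset.mem_univ i), Finset.card_univ, Fintype.card_fin]
  have h1 : (-lam i) ^ (p - 1) * ∏ j ∈ Finset.univ.erase i, (-lam i - -lam j)⁻¹
      = lam i ^ (p - 1) * ∏ j ∈ Finset.univ.erase i, (lam i - lam j)⁻¹ := by
    rw [← hcard, ← Finset.prod_const (-lam i), ← Finset.prod_const (lam i),
      ← Finset.prod_mul_distrib, ← Finset.prod_mul_distrib]
    refine Finset.prod_congr rfl fun j _ => ?_
    rw [show -lam i - -lam j = -(lam i - lam j) by ring, inv_neg]
    ring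
  have h2 : ∏ j ∈ Finset.univ.erase i, (x - -lam j) = ∏ j ∈ Finset.univ.erase i, (x + lam j) :=
    Finset.prod_congr rfl fun j _ => by ring
  rw [div_eq_mul_inv, ← Finset.prod_inv_distrib, Finset.prod_mul_distrib, ← mul_assoc, h1, h2]

open Polynomial in
lemma keySum {p : ℕ} (hp : 0 < p) (lam : Fin p → ℝ) (hinj : Function.Injective lam)
    (hpos : ∀ i, 0 < lam i) (x : ℝ) (hx : 0 < x) :
    ∑ j, (lam j ^ (p - 1) / ∏ k ∈ Finset.univ.erase j, (lam j - lam k)) / (x + lam j)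
      = x ^ (p - 1) / ∏ j, (x + lam j) := by
  have hne : ∀ j, x + lam j ≠ 0 := fun j => by have := hpos j; positivity
  have hprod : (∏ j, (x + lam j)) ≠ 0 := Finset.prod_ne_zero_iff.mpr fun j _ => hne j
  rw [eq_div_iff hprod, ← keyPoly hp lam hinj x, Finset.sum_mul]
  refine Finset.sum_congr rfl fun j _ => ?_
  have hD : (∏ k ∈ Finset.univ.erase j, (lam j - lam k)) ≠ 0 :=
    Finset.prod_ne_zero_iff.mpr fun k hk =>
      sub_ne_zero_of_ne fun h => (Finset.mem_erase.mp hk).1 (hinj h).symm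
  rw [← Finset.mul_prod_erase Finset.univ _ (Finset.mem_univ j)]
  have h := hne j
  field_simp


theorem stmt_17 (H : ℝ) (hH : H ∈ Set.Ioo (1/2 : ℝ) 1) (p : ℕ)
    (lam : Fin p → ℝ) (hpos : ∀ i, 0 < lam i) (hinj : Function.Injective lam)
    (K : Fin p → ℝ)
    (hK : ∀ i, K i = lam i ^ (p - 1) / ∏ j ∈ Finset.univ.erase i, (lam i - lam j))
    (t : ℝ) (ht : 0 ≤ t) :
    ∑ i, ∑ j, K i * K j *
        (lam i ^ (1 - 2 * H) * fH1 H (lam i * t) + lam j ^ (1 - 2 * H) * fH2 H (lam j * t)) /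
          (lam i + lam j) =
      (1/2 : ℝ) * ∑ i,
        (lam i ^ (2 * (p:ℝ) - 2 * H - 2) /
            ∏ j ∈ Finset.univ.erase i, (lam i ^ 2 - lam j ^ 2)) * fH H (lam i * t) := by
  rcases Nat.eq_zero_or_pos p with hp0 | hp
  · subst hp0; simp
  have hDne : ∀ i : Fin p, (∏ j ∈ Finset.univ.erase i, (lam i - lam j)) ≠ 0 := fun i =>
    Finset.prod_ne_zero_iff.mpr fun j hj =>
      sub_ne_zero_of_ne fun h => (Finset.mem_erase.mp hj).1 (hinj h).symm
  have hEpos : ∀ i : Fin p, 0 < ∏ j ∈ Finset.univ.erase i, (lam i + lam j) := fun i =>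
    Finset.prod_pos fun j _ => by have := hpos i; have := hpos j; linarith
  have hS : ∀ i : Fin p, ∑ j, K j / (lam i + lam j)
      = lam i ^ (p - 1) / ∏ j, (lam i + lam j) := fun i => by
    simp_rw [hK]
    exact keySum hp lam hinj hpos (lam i) (hpos i)
  have e1 : ∀ i j : Fin p, K i * K j *
        (lam i ^ (1 - 2 * H) * fH1 H (lam i * t) + lam j ^ (1 - 2 * H) * fH2 H (lam j * t)) /
          (lam i + lam j)
      = (K i * (lam i ^ (1 - 2 * H) * fH1 H (lam i * t))) * (K j / (lam i + lam j))
        + (K j * (lam j ^ (1 - 2 * H) * fH2 H (lam j * t))) * (K i / (lam j + lam i)) := by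
    intro i j; rw [add_comm (lam j) (lam i)]; ring
  have e2 : ∑ i : Fin p, ∑ j : Fin p,
        (K j * (lam j ^ (1 - 2 * H) * fH2 H (lam j * t))) * (K i / (lam j + lam i))
      = ∑ j : Fin p, (K j * (lam j ^ (1 - 2 * H) * fH2 H (lam j * t)))
          * ∑ i : Fin p, K i / (lam j + lam i) := by
    rw [Finset.sum_comm]
    simp_rw [← Finset.mul_sum]
  simp_rw [e1, Finset.sum_add_distrib]
  rw [e2]
  simp_rw [← Finset.mul_sum, hS]
  rw [← Finset.sum_add_distrib, Finset.mul_sum]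
  refine Finset.sum_congr rfl fun i _ => ?_
  set L := lam i with hLdef
  have hL : 0 < L := hpos i
  have hD := hDne i
  have hE := hEpos i
  have hfull : ∏ j, (L + lam j)
      = (L + L) * ∏ j ∈ Finset.univ.erase i, (L + lam j) :=
    (Finset.mul_prod_erase Finset.univ _ (Finset.mem_univ i)).symm
  have hsq : ∏ j ∈ Finset.univ.erase i, (L ^ 2 - lam j ^ 2)
      = (∏ j ∈ Finset.univ.erase i, (L - lam j)) * ∏ j ∈ Finset.univ.erase i, (L + lam j) := by
    rw [← Finset.prod_mul_distrib]
    exact Finset.prod_congr rfl fun j _ => by ring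
  have hpow : L ^ (p - 1) * L ^ (p - 1) * L ^ (1 - 2 * H)
      = L * L ^ (2 * (p:ℝ) - 2 * H - 2) := by
    have h1 : L ^ (p - 1) = L ^ ((p:ℝ) - 1) := by
      rw [← Real.rpow_natCast L (p - 1), Nat.cast_sub hp, Nat.cast_one]
    rw [h1, ← Real.rpow_add hL, ← Real.rpow_add hL,
      show (2 * (p:ℝ) - 2 * H - 2) = ((p:ℝ) - 1 + ((p:ℝ) - 1) + (1 - 2 * H)) - 1 by ring,
      Real.rpow_sub hL, Real.rpow_one]
    field_simp
  rw [hK i, hfull, hsq, fH]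
  set f1 := fH1 H (L * t)
  set f2 := fH2 H (L * t)
  set P := L ^ (p - 1)
  set X := L ^ (1 - 2 * H)
  set Y := L ^ (2 * (p:ℝ) - 2 * H - 2)
  set D := ∏ j ∈ Finset.univ.erase i, (L - lam j)
  set E := ∏ j ∈ Finset.univ.erase i, (L + lam j)
  field_simp
  linear_combination (2 * (f1 + f2)) * hpow
end
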